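/- arXiv:1611.05937 — 5 statements merged into one kernel-verified Lean document; each statement's English description precedes it below -/
import Mathlib

section
/- For every r ≥ 3 and n ≥ 1, the number of n-tuples (x_1, …, x_n) of elements of the generalized quaternion group Q_{2^r} such that x_1, …, x_n generate the whole group Q_{2^r} equals 2^{(r−2)n+1}·(2^n − 1)·(2^{n−1} − 1). -/
open Matrix Complex

noncomputable section

abbrev SU2 := Matrix.specialUnitaryGroup (Fin 2) ℂ

instance SU2.instGroup : Group SU2 :=
  { (inferInstance : Monoid SU2) with
    inv := fun A => ⟨star A.1, by
      rcases A.2 with ⟨hu, hd⟩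
      refine ⟨⟨?_, ?_⟩, ?_⟩
      · simpa using hu.2
      · simpa using hu.1
      · show (star A.1).det = 1
        rw [Matrix.star_eq_conjTranspose, Matrix.det_conjTranspose]
        simp [show A.1.det = 1 from hd]⟩
    inv_mul_cancel := fun A => Subtype.ext A.2.1.1 }

lemma w_mem : !![(0:ℂ), -1; 1, 0] ∈ Matrix.specialUnitaryGroup (Fin 2) ℂ := by
  rw [Matrix.mem_specialUnitaryGroup_iff, Matrix.mem_unitaryGroup_iff]
  constructor
  · ext i j
    fin_cases i <;> fin_cases j <;>
      simp [Matrix.mul_apply, Fin.sum_univ_two, Matrix.star_apply, Complex.star_def]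
  · simp [Matrix.det_fin_two]

def w : SU2 := ⟨!![(0:ℂ), -1; 1, 0], w_mem⟩

lemma xi_conj (m : ℕ) : (starRingEnd ℂ) (2 * Real.pi * Complex.I / m) =
    -(2 * Real.pi * Complex.I / m) := by
  simp [map_div₀, Complex.conj_I, Complex.conj_ofReal, map_ofNat]
  ring

lemma xi_conj_exp (m : ℕ) : (starRingEnd ℂ) (Complex.exp (2 * Real.pi * Complex.I / m)) =
    Complex.exp (-(2 * Real.pi * Complex.I / m)) := by
  rw [← Complex.exp_conj, xi_conj]

lemma xi_conj_exp' (m : ℕ) : (starRingEnd ℂ) (Complex.exp (-(2 * Real.pi * Complex.I / m))) =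
    Complex.exp (2 * Real.pi * Complex.I / m) := by
  rw [← Complex.exp_conj, map_neg, xi_conj, neg_neg]

lemma xi_mem (m : ℕ) :
    !![Complex.exp (2 * Real.pi * Complex.I / m), 0; 0,
       Complex.exp (-(2 * Real.pi * Complex.I / m))]
      ∈ Matrix.specialUnitaryGroup (Fin 2) ℂ := by
  rw [Matrix.mem_specialUnitaryGroup_iff, Matrix.mem_unitaryGroup_iff]
  have hstar : star (!![Complex.exp (2 * Real.pi * Complex.I / m), 0; 0,
       Complex.exp (-(2 * Real.pi * Complex.I / m))]) =
      !![Complex.exp (-(2 * Real.pi * Complex.I / m)), 0; 0,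
       Complex.exp (2 * Real.pi * Complex.I / m)] := by
    ext i j
    fin_cases i <;> fin_cases j <;>
      simp [Matrix.star_apply, Complex.star_def, xi_conj_exp m, xi_conj_exp' m]
  constructor
  · rw [hstar]
    ext i j
    fin_cases i <;> fin_cases j <;>
      simp [Matrix.mul_apply, Fin.sum_univ_two, ← Complex.exp_add]
  · simp [Matrix.det_fin_two, ← Complex.exp_add]

def ξ (m : ℕ) : SU2 :=
  ⟨!![Complex.exp (2 * Real.pi * Complex.I / m), 0; 0,
      Complex.exp (-(2 * Real.pi * Complex.I / m))], xi_mem m⟩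

/-- `μ m` : the cyclic subgroup of `SU2` generated by `ξ m`. -/
def μ (m : ℕ) : Subgroup SU2 := Subgroup.zpowers (ξ m)

/-- `genQ q` is the generalized quaternion group `Q_{2^{q+1}} ⊆ SU2`,
generated by `ξ_{2^q}` and `w`. -/
def genQ (q : ℕ) : Subgroup SU2 := Subgroup.closure {ξ (2 ^ q), w}

/-- Lower central series of a subgroup, as subgroups of the ambient group:
`lcs H k = Γ^{k+1}(H)`, so `lcs H 0 = Γ¹(H) = H` and `lcs H (k+1) = ⁅lcs H k, H⁆`. -/
def lcs {G : Type*} [Group G] (H : Subgroup G) : ℕ → Subgroup G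
  | 0 => H
  | (k + 1) => ⁅lcs H k, H⁆

/-- The set of diagonal matrices in `SU2`: the maximal torus `T`. -/
def Tset : Set SU2 :=
  {x | (x : Matrix (Fin 2) (Fin 2) ℂ) 0 1 = 0 ∧ (x : Matrix (Fin 2) (Fin 2) ℂ) 1 0 = 0}

/-- The set of anti-diagonal matrices in `SU2`: the coset `wT`. -/
def wTset : Set SU2 :=
  {x | (x : Matrix (Fin 2) (Fin 2) ℂ) 0 0 = 0 ∧ (x : Matrix (Fin 2) (Fin 2) ℂ) 1 1 = 0}

/-- `PU(2)`, the quotient of `SU(2)` by its center `{±I}`. -/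
abbrev PU2 := SU2 ⧸ Subgroup.center SU2


namespace QCount

noncomputable def ζ (m : ℕ) : ℂ := Complex.exp (2 * Real.pi * Complex.I / m)

lemma zeta_ne_zero (m : ℕ) : ζ m ≠ 0 := Complex.exp_ne_zero _

lemma coe_inv (A : SU2) : ((A⁻¹ : SU2) : Matrix (Fin 2) (Fin 2) ℂ) = star (A : Matrix (Fin 2) (Fin 2) ℂ) := rfl

lemma coe_mul (A B : SU2) : ((A * B : SU2) : Matrix (Fin 2) (Fin 2) ℂ) = (A : Matrix (Fin 2) (Fin 2) ℂ) * B := rfl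

lemma coe_one : ((1 : SU2) : Matrix (Fin 2) (Fin 2) ℂ) = 1 := rfl

lemma coe_pow (A : SU2) (n : ℕ) : ((A ^ n : SU2) : Matrix (Fin 2) (Fin 2) ℂ) = (A : Matrix (Fin 2) (Fin 2) ℂ) ^ n := rfl

lemma xi_coe (m : ℕ) : ((ξ m : SU2) : Matrix (Fin 2) (Fin 2) ℂ) = Matrix.diagonal ![ζ m, (ζ m)⁻¹] := by
  rw [show (ζ m)⁻¹ = Complex.exp (-(2 * Real.pi * Complex.I / m)) by rw [ζ, ← Complex.exp_neg]]
  show !![_, 0; 0, _] = _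
  ext i j
  fin_cases i <;> fin_cases j <;> simp [ζ, Matrix.diagonal]

lemma xi_pow_coe (m : ℕ) (k : ℕ) :
    ((ξ m ^ k : SU2) : Matrix (Fin 2) (Fin 2) ℂ) = Matrix.diagonal ![ζ m ^ k, (ζ m)⁻¹ ^ k] := by
  rw [coe_pow, xi_coe, Matrix.diagonal_pow]
  ext i j
  fin_cases i <;> fin_cases j <;> simp [Matrix.diagonal]

lemma xi_zpow_coe (m : ℕ) (k : ℤ) :
    ((ξ m ^ k : SU2) : Matrix (Fin 2) (Fin 2) ℂ) = Matrix.diagonal ![ζ m ^ k, (ζ m)⁻¹ ^ k] := by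
  induction k using Int.induction_on with
  | zero =>
      rw [zpow_zero, coe_one]
      ext i j
      fin_cases i <;> fin_cases j <;> simp [Matrix.diagonal, Matrix.one_apply]
  | succ n ih =>
      rw [_root_.zpow_add_one, coe_mul, ih, xi_coe, Matrix.diagonal_mul_diagonal]
      ext i j
      fin_cases i <;> fin_cases j <;> simp [Matrix.diagonal, zpow_add₀ (zeta_ne_zero m), _root_.zpow_neg, _root_.inv_zpow, div_eq_mul_inv, zpow_natCast, inv_inv, mul_comm]
  | pred n ih =>
      rw [_root_.zpow_sub_one, coe_mul, ih, coe_inv, xi_coe]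
      have : star (Matrix.diagonal ![ζ m, (ζ m)⁻¹]) = Matrix.diagonal ![(ζ m)⁻¹, ζ m] := by
        ext i j
        fin_cases i <;> fin_cases j <;>
          simp [Matrix.star_apply, Matrix.diagonal, Complex.star_def, ζ, ← Complex.exp_conj,
            xi_conj m, ← Complex.exp_neg]
      rw [this, Matrix.diagonal_mul_diagonal]
      ext i j
      fin_cases i <;> fin_cases j <;>
        simp [Matrix.diagonal, zpow_sub₀ (zeta_ne_zero m), zpow_add₀ (zeta_ne_zero m),
          _root_.zpow_neg, _root_.inv_zpow, div_eq_mul_inv, zpow_natCast, inv_inv, mul_comm]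


lemma w_coe : ((w : SU2) : Matrix (Fin 2) (Fin 2) ℂ) = !![(0:ℂ), -1; 1, 0] := rfl

lemma w_mul_xi_zpow (m : ℕ) (k : ℤ) : w * ξ m ^ k = ξ m ^ (-k) * w := by
  apply Subtype.ext
  rw [coe_mul, coe_mul, xi_zpow_coe, xi_zpow_coe, w_coe]
  ext i j
  fin_cases i <;> fin_cases j <;>
    simp [Matrix.mul_apply, Fin.sum_univ_two, Matrix.diagonal, _root_.zpow_neg,
      _root_.inv_zpow, neg_neg]

lemma xi_pow_eq_one (m : ℕ) (hm : m ≠ 0) : ξ m ^ m = 1 := by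
  have hζ := Complex.isPrimitiveRoot_exp m hm
  have hone : ζ m ^ m = 1 := hζ.pow_eq_one
  apply Subtype.ext
  rw [coe_pow, xi_coe, Matrix.diagonal_pow, coe_one]
  ext i j
  fin_cases i <;> fin_cases j <;>
    simp [Matrix.diagonal, Matrix.one_apply, hone, inv_pow]

lemma orderOf_xi (m : ℕ) (hm : 0 < m) : orderOf (ξ m) = m := by
  have hζ := Complex.isPrimitiveRoot_exp m hm.ne'
  rw [orderOf_eq_iff hm]
  refine ⟨xi_pow_eq_one m hm.ne', fun l hl hl0 h1 => ?_⟩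
  have := congrArg (fun A : SU2 => (A : Matrix (Fin 2) (Fin 2) ℂ) 0 0) h1
  simp only [coe_pow, xi_coe, Matrix.diagonal_pow, coe_one] at this
  have h2 : ζ m ^ l = 1 := by
    simpa [Matrix.diagonal, Matrix.one_apply] using this
  exact hζ.pow_ne_one_of_pos_of_lt hl0.ne' hl h2

lemma zeta_pow_half (q : ℕ) (hq : 1 ≤ q) : ζ (2 ^ q) ^ (2 ^ (q - 1)) = -1 := by
  rw [ζ, ← Complex.exp_nat_mul]
  have h2 : ((2:ℂ)) ^ q = 2 * 2 ^ (q - 1) := by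
    rw [← pow_succ']
    congr 1
    omega
  have hne : ((2:ℂ)) ^ (q-1) ≠ 0 := pow_ne_zero _ two_ne_zero
  have : ((2 ^ (q - 1) : ℕ) : ℂ) * (2 * ↑Real.pi * Complex.I / (2 ^ q : ℕ)) = Real.pi * Complex.I := by
    push_cast
    rw [h2]
    field_simp
  rw [this, Complex.exp_pi_mul_I]

lemma w_sq (q : ℕ) (hq : 1 ≤ q) : w ^ 2 = ξ (2 ^ q) ^ (2 ^ (q - 1)) := by
  apply Subtype.ext
  rw [coe_pow, coe_pow, xi_coe, Matrix.diagonal_pow, w_coe]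
  have h1 : ζ (2^q) ^ 2 ^ (q-1) = -1 := zeta_pow_half q hq
  have h2 : ((ζ (2^q))⁻¹) ^ 2 ^ (q-1) = -1 := by
    rw [inv_pow, h1]; norm_num
  ext i j
  fin_cases i <;> fin_cases j <;>
    simp [pow_two, Matrix.mul_apply, Fin.sum_univ_two, Matrix.diagonal, h1, h2]


lemma xi_mul_w (m : ℕ) (k : ℤ) : ξ m ^ k * w = w * ξ m ^ (-k) := by
  rw [w_mul_xi_zpow, neg_neg]

lemma w_inv_eq (q : ℕ) (hq : 1 ≤ q) :
    w⁻¹ = ξ (2 ^ q) ^ (-(2 ^ (q - 1) : ℤ)) * w := by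
  have h := w_sq q hq
  have : w * w = ξ (2 ^ q) ^ ((2 ^ (q - 1) : ℕ) : ℤ) := by
    rw [← pow_two, h, zpow_natCast]
  calc w⁻¹ = (w * w)⁻¹ * w := by group
  _ = ξ (2 ^ q) ^ (-(2 ^ (q - 1) : ℤ)) * w := by
      rw [this, ← _root_.zpow_neg]
      norm_num

lemma mem_genQ_iff (q : ℕ) (hq : 1 ≤ q) (x : SU2) :
    x ∈ genQ q ↔ (∃ k : ℤ, x = ξ (2 ^ q) ^ k) ∨ (∃ k : ℤ, x = w * ξ (2 ^ q) ^ k) := by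
  set m := 2 ^ q with hm
  set a := ξ m with ha
  have hww : w * w = a ^ ((2 ^ (q - 1) : ℕ) : ℤ) := by
    rw [← pow_two, w_sq q hq, zpow_natCast]
  let H : Subgroup SU2 :=
  { carrier := {x | (∃ k : ℤ, x = a ^ k) ∨ (∃ k : ℤ, x = w * a ^ k)}
    one_mem' := Or.inl ⟨0, by simp⟩
    mul_mem' := by
      rintro x y (⟨j, rfl⟩ | ⟨j, rfl⟩) (⟨k, rfl⟩ | ⟨k, rfl⟩)
      · exact Or.inl ⟨j + k, by rw [_root_.zpow_add]⟩
      · refine Or.inr ⟨k - j, ?_⟩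
        rw [← mul_assoc, xi_mul_w, mul_assoc, ← _root_.zpow_add]
        congr 2
        ring
      · exact Or.inr ⟨j + k, by rw [mul_assoc, ← _root_.zpow_add]⟩
      · refine Or.inl ⟨(2 ^ (q - 1) : ℕ) + (k - j), ?_⟩
        calc w * a ^ j * (w * a ^ k) = w * (a ^ j * w) * a ^ k := by group
        _ = w * w * (a ^ (-j) * a ^ k) := by rw [xi_mul_w, ← ha]; group
        _ = a ^ ((2 ^ (q - 1) : ℕ) + (k - j)) := by
            rw [hww, ← _root_.zpow_add, ← _root_.zpow_add]
            congr 1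
            ring
    inv_mem' := by
      rintro x (⟨k, rfl⟩ | ⟨k, rfl⟩)
      · exact Or.inl ⟨-k, by rw [_root_.zpow_neg]⟩
      · refine Or.inr ⟨k + (2 ^ (q - 1) : ℕ), ?_⟩
        rw [_root_.mul_inv_rev, w_inv_eq q hq, ← _root_.zpow_neg, ← mul_assoc, ← _root_.zpow_add, xi_mul_w]
        congr 2
        push_cast
        ring }
  constructor
  · intro hx
    have : genQ q ≤ H := by
      rw [genQ]
      apply Subgroup.closure_le _ |>.mpr
      rintro y hy
      rcases hy with h | h
      · exact Or.inl ⟨1, by simp [h, ← ha, ← hm]⟩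
      · exact Or.inr ⟨0, by simp [Set.mem_singleton_iff.mp h]⟩
    exact this hx
  · have hxi : a ∈ genQ q := Subgroup.subset_closure (by left; rfl)
    have hw : w ∈ genQ q := Subgroup.subset_closure (by right; rfl)
    rintro (⟨k, rfl⟩ | ⟨k, rfl⟩)
    · exact Subgroup.zpow_mem _ hxi k
    · exact Subgroup.mul_mem _ hw (Subgroup.zpow_mem _ hxi k)


def ε (k : ℤ) : ℤˣ := if Even k then 1 else -1

lemma eps_add (j k : ℤ) : ε (j + k) = ε j * ε k := by
  simp only [ε, Int.even_add]
  by_cases hj : Even j <;> by_cases hk : Even k <;> simp [hj, hk]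

lemma eps_neg (k : ℤ) : ε (-k) = ε k := by
  simp [ε, even_neg]

lemma eps_even (j k : ℤ) (h : Even j) : ε (j + k) = ε k := by
  rw [eps_add]
  simp [ε, h]

local notation "M2" => Matrix (Fin 2) (Fin 2) ℂ

open scoped Classical in
noncomputable def gg (q : ℕ) (x : SU2) : ℤˣ × ℤˣ :=
  (if (if (x : M2) 0 0 = 0 then (x : M2) 1 0 else (x : M2) 0 0) ^ (2 ^ (q - 1)) = 1
     then 1 else -1,
   if (x : M2) 0 0 = 0 then -1 else 1)

lemma zeta_zpow_pow (q : ℕ) (hq : 1 ≤ q) (k : ℤ) :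
    (ζ (2 ^ q) ^ k) ^ (2 ^ (q - 1)) = (-1 : ℂ) ^ k := by
  rw [← zeta_pow_half q hq, ← zpow_natCast (ζ (2^q) ^ k), ← _root_.zpow_mul, mul_comm, _root_.zpow_mul,
    zpow_natCast]

lemma first_val (q : ℕ) (hq : 1 ≤ q) (k : ℤ) (c : ℂ) (hc : c = ζ (2 ^ q) ^ k) :
    (if c ^ (2 ^ (q - 1)) = 1 then (1 : ℤˣ) else -1) = ε k := by
  subst hc
  rw [zeta_zpow_pow q hq]
  rcases Int.even_or_odd k with h | h
  · rw [if_pos (h.neg_one_zpow), ε, if_pos h]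
  · rw [h.neg_one_zpow, ε, if_neg (Int.not_even_iff_odd.mpr h), if_neg (by norm_num)]

lemma gg_diag (q : ℕ) (hq : 1 ≤ q) (k : ℤ) : gg q (ξ (2 ^ q) ^ k) = (ε k, 1) := by
  have h00 : ((ξ (2^q) ^ k : SU2) : M2) 0 0 = ζ (2^q) ^ k := by
    rw [xi_zpow_coe]; simp [Matrix.diagonal]
  have hne : ((ξ (2^q) ^ k : SU2) : M2) 0 0 ≠ 0 := by
    rw [h00]; exact zpow_ne_zero _ (zeta_ne_zero _)
  unfold gg
  rw [if_neg hne, if_neg hne]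
  exact Prod.ext (first_val q hq k _ h00) rfl

lemma gg_anti (q : ℕ) (hq : 1 ≤ q) (k : ℤ) : gg q (w * ξ (2 ^ q) ^ k) = (ε k, -1) := by
  have hco : ((w * ξ (2^q) ^ k : SU2) : M2) = !![0, -((ζ (2^q))⁻¹ ^ k); ζ (2^q) ^ k, 0] := by
    rw [coe_mul, xi_zpow_coe, w_coe]
    ext i j
    fin_cases i <;> fin_cases j <;>
      simp [Matrix.mul_apply, Fin.sum_univ_two, Matrix.diagonal]
  have h00 : ((w * ξ (2^q) ^ k : SU2) : M2) 0 0 = 0 := by rw [hco]; simp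
  have h10 : ((w * ξ (2^q) ^ k : SU2) : M2) 1 0 = ζ (2^q) ^ k := by rw [hco]; simp
  unfold gg
  rw [if_pos h00, if_pos h00, h10]
  exact Prod.ext (first_val q hq k _ rfl) rfl

lemma nf_mul_da (m : ℕ) (j k : ℤ) :
    ξ m ^ j * (w * ξ m ^ k) = w * ξ m ^ (k - j) := by
  rw [← mul_assoc, xi_mul_w, mul_assoc, ← _root_.zpow_add]
  congr 2
  ring

lemma nf_mul_ad (m : ℕ) (j k : ℤ) :
    (w * ξ m ^ j) * ξ m ^ k = w * ξ m ^ (j + k) := by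
  rw [mul_assoc, ← _root_.zpow_add]

lemma nf_mul_aa (q : ℕ) (hq : 1 ≤ q) (j k : ℤ) :
    (w * ξ (2 ^ q) ^ j) * (w * ξ (2 ^ q) ^ k) =
      ξ (2 ^ q) ^ (((2 ^ (q - 1) : ℕ) : ℤ) + (k - j)) := by
  have hww : w * w = ξ (2^q) ^ ((2 ^ (q - 1) : ℕ) : ℤ) := by
    rw [← pow_two, w_sq q hq, zpow_natCast]
  calc (w * ξ (2^q) ^ j) * (w * ξ (2^q) ^ k) = w * (ξ (2^q) ^ j * w) * ξ (2^q) ^ k := by group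
  _ = w * w * (ξ (2^q) ^ (-j) * ξ (2^q) ^ k) := by rw [xi_mul_w]; group
  _ = _ := by
      rw [hww, ← _root_.zpow_add, ← _root_.zpow_add]
      congr 1
      ring

lemma even_half (q : ℕ) (hq : 2 ≤ q) : Even ((2 ^ (q - 1) : ℕ) : ℤ) := by
  refine ⟨((2 ^ (q - 2) : ℕ) : ℤ), ?_⟩
  push_cast
  rw [← two_mul, ← pow_succ']
  congr 1
  omega

lemma gg_mul (q : ℕ) (hq : 2 ≤ q) (x y : SU2) (hx : x ∈ genQ q) (hy : y ∈ genQ q) :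
    gg q (x * y) = gg q x * gg q y := by
  have hq1 : 1 ≤ q := le_trans (by norm_num) hq
  rcases (mem_genQ_iff q hq1 x).mp hx with ⟨j, rfl⟩ | ⟨j, rfl⟩ <;>
    rcases (mem_genQ_iff q hq1 y).mp hy with ⟨k, rfl⟩ | ⟨k, rfl⟩
  · rw [← _root_.zpow_add, gg_diag q hq1, gg_diag q hq1, gg_diag q hq1, eps_add]
    rfl
  · rw [nf_mul_da, gg_anti q hq1, gg_diag q hq1, gg_anti q hq1]
    rw [show k - j = -j + k by ring, eps_add, eps_neg]
    rfl
  · rw [nf_mul_ad, gg_anti q hq1, gg_diag q hq1, gg_anti q hq1, eps_add]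
    rfl
  · rw [nf_mul_aa q hq1, gg_diag q hq1, gg_anti q hq1, gg_anti q hq1,
      eps_even _ _ (even_half q hq), show k - j = -j + k by ring, eps_add, eps_neg]
    ext <;> simp [mul_comm]

lemma gg_one (q : ℕ) : gg q 1 = 1 := by
  have h00 : ((1 : SU2) : M2) 0 0 = 1 := by rw [coe_one]; simp
  unfold gg
  rw [h00]
  norm_num


lemma xi_zpow_m (q : ℕ) : ξ (2 ^ q) ^ ((2 ^ q : ℕ) : ℤ) = 1 := by
  rw [zpow_natCast, xi_pow_eq_one _ (by positivity)]

lemma xi_mem_closure_of_odd (q : ℕ) (a : ℤ) (ha : Odd a) (S : Set SU2)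
    (h : ξ (2 ^ q) ^ a ∈ Subgroup.closure S) : ξ (2 ^ q) ∈ Subgroup.closure S := by
  have hcop : IsCoprime a ((2 ^ q : ℕ) : ℤ) := by
    rw [Int.isCoprime_iff_gcd_eq_one]
    have h2 : Nat.Coprime a.natAbs 2 := (Int.natAbs_odd.mpr ha).coprime_two_right
    have h3 := Nat.Coprime.pow_right q h2
    show a.natAbs.gcd ((2 ^ q : ℕ) : ℤ).natAbs = 1
    rw [Int.natAbs_natCast]
    exact h3
  obtain ⟨u, v, huv⟩ := hcop
  have key : ξ (2 ^ q) = (ξ (2 ^ q) ^ a) ^ u * (ξ (2 ^ q) ^ ((2 ^ q : ℕ) : ℤ)) ^ v := by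
    rw [← _root_.zpow_mul, ← _root_.zpow_mul, ← _root_.zpow_add]
    rw [show a * u + (2 ^ q : ℕ) * v = u * a + v * (2 ^ q : ℕ) by ring, huv, zpow_one]
  rw [key, xi_zpow_m q]
  simpa using Subgroup.zpow_mem _ h u

lemma eps_eq_one_iff (k : ℤ) : ε k = 1 ↔ Even k := by
  unfold ε
  split_ifs with h <;> simp [h]

lemma gen_of_pair (q : ℕ) (hq : 2 ≤ q) (S : Set SU2) (hS : S ⊆ (genQ q : Set SU2))
    (u v : SU2) (hu : u ∈ S) (hv : v ∈ S)
    (h1 : gg q u ≠ 1) (h2 : gg q v ≠ 1) (hne : gg q u ≠ gg q v) :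
    Subgroup.closure S = genQ q := by
  have hq1 : 1 ≤ q := by omega
  have hle : Subgroup.closure S ≤ genQ q := (Subgroup.closure_le _).mpr hS
  have huS : u ∈ Subgroup.closure S := Subgroup.subset_closure hu
  have hvS : v ∈ Subgroup.closure S := Subgroup.subset_closure hv
  -- key: it suffices that ξ and w are in the closure
  have main : ξ (2 ^ q) ∈ Subgroup.closure S ∧ w ∈ Subgroup.closure S := by
    have hwclo : ∀ b : ℤ, ξ (2 ^ q) ∈ Subgroup.closure S →
        w * ξ (2 ^ q) ^ b ∈ Subgroup.closure S → w ∈ Subgroup.closure S := by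
      intro b hxi hwb
      have : w = (w * ξ (2 ^ q) ^ b) * (ξ (2 ^ q) ^ b)⁻¹ := by group
      rw [this]
      exact Subgroup.mul_mem _ hwb (Subgroup.inv_mem _ (Subgroup.zpow_mem _ hxi b))
    rcases (mem_genQ_iff q hq1 u).mp (hS hu) with ⟨a, rfl⟩ | ⟨a, rfl⟩ <;>
      rcases (mem_genQ_iff q hq1 v).mp (hS hv) with ⟨b, rfl⟩ | ⟨b, rfl⟩
    · -- both diagonal: contradiction
      exfalso
      rw [gg_diag q hq1] at h1 h2 hne
      have ha : ¬ Even a := fun h => h1 (by rw [Prod.ext_iff]; exact ⟨(eps_eq_one_iff a).mpr h, rfl⟩)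
      have hb : ¬ Even b := fun h => h2 (by rw [Prod.ext_iff]; exact ⟨(eps_eq_one_iff b).mpr h, rfl⟩)
      apply hne
      rw [gg_diag q hq1]
      simp [ε, ha, hb]
    · have ha : Odd a := by
        rw [gg_diag q hq1] at h1
        rw [← Int.not_even_iff_odd]
        intro h
        exact h1 (by rw [Prod.ext_iff]; exact ⟨(eps_eq_one_iff a).mpr h, rfl⟩)
      have hxi := xi_mem_closure_of_odd q a ha S huS
      exact ⟨hxi, hwclo b hxi hvS⟩
    · have hb : Odd b := by
        rw [gg_diag q hq1] at h2
        rw [← Int.not_even_iff_odd]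
        intro h
        exact h2 (by rw [Prod.ext_iff]; exact ⟨(eps_eq_one_iff b).mpr h, rfl⟩)
      have hxi := xi_mem_closure_of_odd q b hb S hvS
      exact ⟨hxi, hwclo a hxi huS⟩
    · -- both antidiagonal
      have hab : Odd (b - a) := by
        rw [gg_anti q hq1, gg_anti q hq1] at hne
        have hne' : ¬ (Even b ↔ Even a) := by
          intro h
          apply hne
          rw [Prod.ext_iff]
          refine ⟨?_, rfl⟩
          unfold ε
          by_cases hbb : Even b
          · rw [if_pos (h.mp hbb), if_pos hbb]
          · rw [if_neg (fun hh => hbb (h.mpr hh)), if_neg hbb]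
        rw [← Int.even_sub] at hne'
        exact Int.not_even_iff_odd.mp hne'
      have hprod : ξ (2 ^ q) ^ (b - a) = (w * ξ (2 ^ q) ^ a)⁻¹ * (w * ξ (2 ^ q) ^ b) := by
        rw [_root_.mul_inv_rev]
        calc ξ (2^q) ^ (b-a) = (ξ (2^q) ^ a)⁻¹ * (ξ (2^q) ^ b) := by
              rw [← _root_.zpow_neg, ← _root_.zpow_add]; congr 1; ring
        _ = (ξ (2^q) ^ a)⁻¹ * (w⁻¹ * w) * ξ (2^q) ^ b := by group
        _ = _ := by group
      have hmem : ξ (2 ^ q) ^ (b - a) ∈ Subgroup.closure S := by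
        rw [hprod]
        exact Subgroup.mul_mem _ (Subgroup.inv_mem _ huS) hvS
      have hxi := xi_mem_closure_of_odd q (b - a) hab S hmem
      exact ⟨hxi, hwclo a hxi huS⟩
  apply le_antisymm hle
  rw [genQ]
  apply (Subgroup.closure_le _).mpr
  rintro y (rfl | hy)
  · exact main.1
  · rw [Set.mem_singleton_iff.mp hy]
    exact main.2


def fQ (q : ℕ) (hq : 2 ≤ q) : (genQ q) →* ℤˣ × ℤˣ where
  toFun x := gg q x.1
  map_one' := gg_one q
  map_mul' x y := gg_mul q hq x.1 y.1 x.2 y.2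

lemma xi_mem_genQ (q : ℕ) : ξ (2 ^ q) ∈ genQ q := Subgroup.subset_closure (by left; rfl)

lemma w_mem_genQ (q : ℕ) : w ∈ genQ q := Subgroup.subset_closure (by right; rfl)

lemma eps_zero : ε 0 = 1 := by simp [ε]

lemma eps_one : ε 1 = -1 := by simp [ε]

lemma fQ_surj (q : ℕ) (hq : 2 ≤ q) : Function.Surjective (fQ q hq) := by
  have hq1 : 1 ≤ q := by omega
  intro c
  obtain ⟨s, t⟩ := c
  have h1 : fQ q hq ⟨ξ (2^q) ^ (1:ℤ), Subgroup.zpow_mem _ (xi_mem_genQ q) 1⟩ = (-1, 1) := by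
    show gg q (ξ (2^q) ^ (1:ℤ)) = _
    rw [gg_diag q hq1, eps_one]
  have h0 : fQ q hq ⟨ξ (2^q) ^ (0:ℤ), Subgroup.zpow_mem _ (xi_mem_genQ q) 0⟩ = (1, 1) := by
    show gg q (ξ (2^q) ^ (0:ℤ)) = _
    rw [gg_diag q hq1, eps_zero]
  have hw : fQ q hq ⟨w * ξ (2^q) ^ (0:ℤ),
      Subgroup.mul_mem _ (w_mem_genQ q) (Subgroup.zpow_mem _ (xi_mem_genQ q) 0)⟩ = (1, -1) := by
    show gg q (w * ξ (2^q) ^ (0:ℤ)) = _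
    rw [gg_anti q hq1, eps_zero]
  have hwx : fQ q hq ⟨w * ξ (2^q) ^ (1:ℤ),
      Subgroup.mul_mem _ (w_mem_genQ q) (Subgroup.zpow_mem _ (xi_mem_genQ q) 1)⟩ = (-1, -1) := by
    show gg q (w * ξ (2^q) ^ (1:ℤ)) = _
    rw [gg_anti q hq1, eps_one]
  rcases Int.units_eq_one_or s with rfl | rfl <;> rcases Int.units_eq_one_or t with rfl | rfl
  · exact ⟨_, h0⟩
  · exact ⟨_, hw⟩
  · exact ⟨_, h1⟩
  · exact ⟨_, hwx⟩

lemma klein_sq (c : ℤˣ × ℤˣ) : c ^ 2 = 1 := by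
  obtain ⟨s, t⟩ := c
  rcases Int.units_eq_one_or s with rfl | rfl <;> rcases Int.units_eq_one_or t with rfl | rfl <;>
    decide

lemma klein_sq_z (c : ℤˣ × ℤˣ) : c ^ (2:ℤ) = 1 := by
  rw [show (2:ℤ) = ((2:ℕ):ℤ) by norm_num, zpow_natCast]
  exact klein_sq c

lemma klein_zpow (c : ℤˣ × ℤˣ) (k : ℤ) : c ^ k = 1 ∨ c ^ k = c := by
  rcases Int.even_or_odd k with ⟨t, rfl⟩ | ⟨t, rfl⟩
  · left
    rw [show t + t = 2 * t by ring, _root_.zpow_mul]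
    norm_num
    rw [klein_sq, _root_.one_zpow]
  · right
    rw [_root_.zpow_add, _root_.zpow_mul]
    norm_num
    rw [klein_sq, _root_.one_zpow]

lemma klein_gen (A : Set (ℤˣ × ℤˣ)) (hA : Subgroup.closure A = ⊤) :
    ∃ a ∈ A, ∃ b ∈ A, a ≠ 1 ∧ b ≠ 1 ∧ a ≠ b := by
  by_contra hcon
  push_neg at hcon
  -- hcon : ∀ a ∈ A, ∀ b ∈ A, a ≠ 1 → b ≠ 1 → a = b
  have key : ∃ c : ℤˣ × ℤˣ, ∀ a ∈ A, a = 1 ∨ a = c := by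
    by_cases h : ∀ a ∈ A, a = 1
    · exact ⟨1, fun a ha => Or.inl (h a ha)⟩
    · push_neg at h
      obtain ⟨c, hcA, hc1⟩ := h
      refine ⟨c, fun a ha => ?_⟩
      by_cases ha1 : a = 1
      · exact Or.inl ha1
      · exact Or.inr (hcon a ha c hcA ha1 hc1)
  obtain ⟨c, hc⟩ := key
  have hle : Subgroup.closure A ≤ Subgroup.zpowers c := by
    apply (Subgroup.closure_le _).mpr
    intro a ha
    rcases hc a ha with rfl | rfl
    · exact ⟨0, by simp⟩
    · exact ⟨1, by simp⟩
  rw [hA] at hle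
  set d : ℤˣ × ℤˣ := if c = (-1, 1) then (1, -1) else (-1, 1) with hd
  have hd1 : d ≠ 1 := by
    rw [hd]; split_ifs <;> decide
  have hdc : d ≠ c := by
    rw [hd]; split_ifs with h
    · rw [h]; decide
    · exact fun hh => h hh.symm
  obtain ⟨k, hk⟩ := hle (Subgroup.mem_top d)
  change c ^ k = d at hk
  rcases klein_zpow c k with h | h <;> rw [h] at hk
  · exact hd1 hk.symm
  · exact hdc hk.symm

lemma map_subtype_eq_iff {G : Type*} [Group G] (H : Subgroup G) (K : Subgroup H) :
    Subgroup.map H.subtype K = H ↔ K = ⊤ := by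
  have htop : Subgroup.map H.subtype ⊤ = H := by
    rw [← MonoidHom.range_eq_map, Subgroup.range_subtype]
  constructor
  · intro h
    apply Subgroup.map_injective H.subtype_injective
    rw [h, htop]
  · rintro rfl
    exact htop

def P {n : ℕ} (h : Fin n → ℤˣ × ℤˣ) : Prop :=
  ∃ i j, h i ≠ 1 ∧ h j ≠ 1 ∧ h i ≠ h j

lemma crit (q : ℕ) (hq : 2 ≤ q) (n : ℕ) (y : Fin n → (genQ q)) :
    Subgroup.closure (Set.range fun i => ((y i : SU2))) = genQ q ↔
      P (fun i => fQ q hq (y i)) := by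
  constructor
  · intro h
    have h0 : Subgroup.map (genQ q).subtype (Subgroup.closure (Set.range y)) = genQ q := by
      rw [MonoidHom.map_closure]
      rw [show (genQ q).subtype '' Set.range y = Set.range fun i => ((y i : SU2)) from
        (Set.range_comp _ _).symm]
      exact h
    have htop : Subgroup.closure (Set.range y) = ⊤ := (map_subtype_eq_iff _ _).mp h0
    have hmap : Subgroup.closure (Set.range fun i => fQ q hq (y i)) = ⊤ := by
      have := congrArg (Subgroup.map (fQ q hq)) htop
      rw [MonoidHom.map_closure] at this
      rw [show (fQ q hq) '' Set.range y = Set.range fun i => fQ q hq (y i) from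
        (Set.range_comp _ _).symm] at this
      rw [this, Subgroup.map_top_of_surjective _ (fQ_surj q hq)]
    obtain ⟨a, ⟨i, hi⟩, b, ⟨j, hj⟩, ha1, hb1, hab⟩ := klein_gen _ hmap
    exact ⟨i, j, by rw [hi]; exact ha1, by rw [hj]; exact hb1, by rw [hi, hj]; exact hab⟩
  · rintro ⟨i, j, h1, h2, hne⟩
    exact gen_of_pair q hq _ (by rintro z ⟨i', rfl⟩; exact (y i').2) (y i) (y j)
      ⟨i, rfl⟩ ⟨j, rfl⟩ h1 h2 hne


lemma xi_zpow_nat (m : ℕ) (hm : m ≠ 0) : ξ m ^ ((m : ℕ) : ℤ) = 1 := by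
  rw [zpow_natCast, xi_pow_eq_one m hm]

lemma xi_zpow_congr (m : ℕ) (hm : m ≠ 0) (k j : ℤ) (h : (m : ℤ) ∣ (k - j)) :
    ξ m ^ k = ξ m ^ j := by
  obtain ⟨t, ht⟩ := h
  have hk : k = j + (m : ℤ) * t := by linarith
  rw [hk, _root_.zpow_add, _root_.zpow_mul, xi_zpow_nat m hm]
  simp

lemma ent00_diag (m : ℕ) (k : ℕ) : ((ξ m ^ k : SU2) : Matrix (Fin 2) (Fin 2) ℂ) 0 0 = ζ m ^ k := by
  rw [xi_pow_coe]
  simp [Matrix.diagonal]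

lemma ent00_anti (m : ℕ) (k : ℕ) :
    ((w * ξ m ^ k : SU2) : Matrix (Fin 2) (Fin 2) ℂ) 0 0 = 0 := by
  rw [coe_mul, xi_pow_coe, w_coe]
  simp [Matrix.mul_apply, Fin.sum_univ_two, Matrix.diagonal]

def FF (q : ℕ) (p : ZMod (2 ^ q) × Bool) : genQ q :=
  ⟨(if p.2 then w else 1) * ξ (2 ^ q) ^ (p.1.val), by
    refine Subgroup.mul_mem _ ?_ (Subgroup.pow_mem _ (xi_mem_genQ q) _)
    cases p.2
    · simpa using Subgroup.one_mem _
    · simpa using w_mem_genQ q⟩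

lemma FF_bij (q : ℕ) (hq : 1 ≤ q) : Function.Bijective (FF q) := by
  haveI : NeZero (2 ^ q) := ⟨pow_ne_zero _ two_ne_zero⟩
  have hm : (2 : ℕ) ^ q ≠ 0 := pow_ne_zero _ two_ne_zero
  have hζ := Complex.isPrimitiveRoot_exp (2 ^ q) hm
  constructor
  · rintro ⟨k1, s1⟩ ⟨k2, s2⟩ h
    rw [FF, FF, Subtype.mk_eq_mk] at h
    have hvals : ∀ k1' k2' : ZMod (2 ^ q), ξ (2^q) ^ k1'.val = ξ (2^q) ^ k2'.val → k1' = k2' := by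
      intro k1' k2' hh
      have := congrArg (fun A : SU2 => (A : Matrix (Fin 2) (Fin 2) ℂ) 0 0) hh
      simp only [ent00_diag] at this
      have := hζ.pow_inj (ZMod.val_lt k1') (ZMod.val_lt k2') this
      exact ZMod.val_injective _ this
    match s1, s2, h with
    | false, false, h =>
        simp only [if_neg Bool.false_ne_true, one_mul] at h
        rw [hvals _ _ h]
    | true, true, h =>
        simp only [if_pos rfl] at h
        rw [hvals _ _ (mul_left_cancel h)]
    | false, true, h =>
        exfalso
        simp only [if_neg Bool.false_ne_true, one_mul, if_true] at h
        have := congrArg (fun A : SU2 => (A : Matrix (Fin 2) (Fin 2) ℂ) 0 0) h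
        simp only [ent00_diag, ent00_anti] at this
        exact pow_ne_zero _ (zeta_ne_zero _) this
    | true, false, h =>
        exfalso
        simp only [if_neg Bool.false_ne_true, one_mul, if_true] at h
        have := congrArg (fun A : SU2 => (A : Matrix (Fin 2) (Fin 2) ℂ) 0 0) h
        simp only [ent00_diag, ent00_anti] at this
        exact pow_ne_zero _ (zeta_ne_zero _) this.symm
  · rintro ⟨x, hx⟩
    have key : ∀ k : ℤ, ξ (2^q) ^ k = ξ (2^q) ^ (((k : ZMod (2^q))).val) := by
      intro k
      rw [← zpow_natCast]
      apply xi_zpow_congr _ hm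
      rw [ZMod.val_intCast]
      exact ⟨k / (2^q), by push_cast [Int.emod_def]; ring⟩
    rcases (mem_genQ_iff q hq x).mp hx with ⟨k, rfl⟩ | ⟨k, rfl⟩
    · refine ⟨((k : ZMod (2^q)), false), ?_⟩
      rw [FF, Subtype.mk_eq_mk]
      simp only [if_neg Bool.false_ne_true, one_mul]
      exact (key k).symm
    · refine ⟨((k : ZMod (2^q)), true), ?_⟩
      rw [FF, Subtype.mk_eq_mk]
      simp only [if_true]
      rw [← key k]

lemma finite_genQ (q : ℕ) (hq : 1 ≤ q) : Finite (genQ q) :=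
  Finite.of_surjective (FF q) (FF_bij q hq).2

lemma card_genQ (q : ℕ) (hq : 1 ≤ q) : Nat.card (genQ q) = 2 ^ (q + 1) := by
  haveI : NeZero (2 ^ q) := ⟨pow_ne_zero _ two_ne_zero⟩
  rw [← Nat.card_eq_of_bijective _ (FF_bij q hq), Nat.card_prod, Nat.card_zmod]
  have : Nat.card Bool = 2 := by simp [Nat.card_eq_fintype_card]
  rw [this, pow_succ]

lemma card_klein4 : Nat.card (ℤˣ × ℤˣ) = 4 := by
  rw [Nat.card_prod, Nat.card_eq_fintype_card]
  norm_num

lemma card_ker (q : ℕ) (hq : 2 ≤ q) : Nat.card (fQ q hq).ker = 2 ^ (q - 1) := by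
  haveI := finite_genQ q (by omega)
  have h1 := Subgroup.card_eq_card_quotient_mul_card_subgroup (fQ q hq).ker
  have h2 : Nat.card ((genQ q) ⧸ (fQ q hq).ker) = 4 := by
    rw [Nat.card_congr (QuotientGroup.quotientKerEquivOfSurjective _ (fQ_surj q hq)).toEquiv]
    exact card_klein4
  rw [card_genQ q (by omega), h2] at h1
  have h3 : 2 ^ (q + 1) = 4 * 2 ^ (q - 1) := by
    rw [show q + 1 = 2 + (q - 1) by omega, pow_add]
    norm_num
  omega


open scoped Classical

lemma notP_of {n : ℕ} (g : Fin n → ℤˣ × ℤˣ) (c : ℤˣ × ℤˣ)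
    (h : ∀ i, g i = 1 ∨ g i = c) : ¬ P g := by
  rintro ⟨i, j, h1, h2, hne⟩
  rcases h i with hi | hi
  · exact h1 hi
  · rcases h j with hj | hj
    · exact h2 hj
    · exact hne (hi.trans hj.symm)

lemma BInter {n : ℕ} (c d : ℤˣ × ℤˣ) (hcd : c ≠ d) :
    (Finset.univ.filter (fun g : Fin n → ℤˣ × ℤˣ => ∀ i, g i = 1 ∨ g i = c)) ∩
      (Finset.univ.filter (fun g => ∀ i, g i = 1 ∨ g i = d)) = {fun _ => 1} := by
  ext g
  simp only [Finset.mem_inter, Finset.mem_filter, Finset.mem_univ, true_and,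
    Finset.mem_singleton]
  constructor
  · rintro ⟨hc, hd⟩
    funext i
    rcases hc i with h | h
    · exact h
    · rcases hd i with h' | h'
      · exact h'
      · exact absurd (h.symm.trans h') hcd
  · rintro rfl
    exact ⟨fun i => Or.inl rfl, fun i => Or.inl rfl⟩

lemma Bcard {n : ℕ} (c : ℤˣ × ℤˣ) (hc : c ≠ 1) :
    (Finset.univ.filter (fun g : Fin n → ℤˣ × ℤˣ => ∀ i, g i = 1 ∨ g i = c)).card = 2 ^ n := by
  rw [← Fintype.card_subtype]
  rw [Fintype.card_congr (Equiv.subtypePiEquivPi (p := fun _ x => x = 1 ∨ x = c))]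
  rw [Fintype.card_pi]
  have h2 : Fintype.card {x : ℤˣ × ℤˣ // x = 1 ∨ x = c} = 2 := by
    rw [Fintype.card_subtype]
    have : Finset.univ.filter (fun x : ℤˣ × ℤˣ => x = 1 ∨ x = c) = {1, c} := by
      ext x
      simp [Finset.mem_insert]
    rw [this, Finset.card_insert_of_notMem (by simpa using fun h => hc h.symm),
      Finset.card_singleton]
  simp [h2]

lemma card_P (n : ℕ) :
    Nat.card {h : Fin n → ℤˣ × ℤˣ // P h} = 4 ^ n - (3 * 2 ^ n - 2) := by
  classical
  rw [Nat.card_eq_fintype_card, Fintype.card_subtype]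
  set c1 : ℤˣ × ℤˣ := (-1, 1) with hc1
  set c2 : ℤˣ × ℤˣ := (1, -1) with hc2
  set c3 : ℤˣ × ℤˣ := (-1, -1) with hc3
  set B1 := Finset.univ.filter (fun g : Fin n → ℤˣ × ℤˣ => ∀ i, g i = 1 ∨ g i = c1) with hB1
  set B2 := Finset.univ.filter (fun g : Fin n → ℤˣ × ℤˣ => ∀ i, g i = 1 ∨ g i = c2) with hB2
  set B3 := Finset.univ.filter (fun g : Fin n → ℤˣ × ℤˣ => ∀ i, g i = 1 ∨ g i = c3) with hB3
  have hbadeq : Finset.univ.filter (fun g : Fin n → ℤˣ × ℤˣ => ¬ P g) = B1 ∪ B2 ∪ B3 := by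
    ext g
    simp only [hB1, hB2, hB3, Finset.mem_filter, Finset.mem_univ, true_and, Finset.mem_union]
    constructor
    · intro hnp
      rw [P] at hnp
      push_neg at hnp
      by_cases hall : ∀ i, g i = 1
      · exact Or.inl (Or.inl (fun i => Or.inl (hall i)))
      · push_neg at hall
        obtain ⟨i0, hi0⟩ := hall
        have hmem : ∀ i, g i = 1 ∨ g i = g i0 := by
          intro i
          by_cases h : g i = 1
          · exact Or.inl h
          · exact Or.inr (hnp i i0 h hi0)
        have hcases : g i0 = c1 ∨ g i0 = c2 ∨ g i0 = c3 := by
          have : ∀ c : ℤˣ × ℤˣ, c ≠ 1 → c = c1 ∨ c = c2 ∨ c = c3 := by decide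
          exact this _ hi0
        rcases hcases with h | h | h
        · exact Or.inl (Or.inl (fun i => by rw [← h]; exact hmem i))
        · exact Or.inl (Or.inr (fun i => by rw [← h]; exact hmem i))
        · exact Or.inr (fun i => by rw [← h]; exact hmem i)
    · rintro ((h | h) | h)
      · exact notP_of g c1 h
      · exact notP_of g c2 h
      · exact notP_of g c3 h
  have hI12 : (B1 ∩ B2).card = 1 := by
    rw [hB1, hB2, BInter c1 c2 (by decide), Finset.card_singleton]
  have hI13 : (B1 ∩ B3).card = 1 := by
    rw [hB1, hB3, BInter c1 c3 (by decide), Finset.card_singleton]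
  have hI23 : (B2 ∩ B3).card = 1 := by
    rw [hB2, hB3, BInter c2 c3 (by decide), Finset.card_singleton]
  have hc1n : (B1).card = 2 ^ n := Bcard c1 (by decide)
  have hc2n : (B2).card = 2 ^ n := Bcard c2 (by decide)
  have hc3n : (B3).card = 2 ^ n := Bcard c3 (by decide)
  have h12 : (B1 ∪ B2).card + 1 = 2 ^ n + 2 ^ n := by
    rw [← hI12, Finset.card_union_add_card_inter, hc1n, hc2n]
  have hI123 : ((B1 ∪ B2) ∩ B3).card = 1 := by
    rw [Finset.union_inter_distrib_right]
    have : (B1 ∩ B3) ∪ (B2 ∩ B3) = {(fun _ => 1 : Fin n → ℤˣ × ℤˣ)} := by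
      rw [hB1, hB2, hB3, BInter c1 c3 (by decide), BInter c2 c3 (by decide)]
      simp
    rw [this, Finset.card_singleton]
  have h123 : (B1 ∪ B2 ∪ B3).card + 1 = (B1 ∪ B2).card + 2 ^ n := by
    rw [← hI123, Finset.card_union_add_card_inter, hc3n]
  have htot : (Finset.univ.filter (fun g : Fin n → ℤˣ × ℤˣ => P g)).card
      + (B1 ∪ B2 ∪ B3).card = 4 ^ n := by
    rw [← hbadeq]
    rw [Finset.card_filter_add_card_filter_not]
    rw [Finset.card_univ, Fintype.card_fun]
    have : Fintype.card (ℤˣ × ℤˣ) = 4 := by norm_num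
    rw [this, Fintype.card_fin]
  have hpow : 2 ^ n ≥ 1 := Nat.one_le_two_pow
  have h4 : 4 ^ n = 2 ^ n * 2 ^ n := by
    rw [← Nat.mul_pow]
  omega


noncomputable def fiberEquiv {G H : Type*} [Group G] [Group H] (φ : G →* H)
    (hs : Function.Surjective φ) (n : ℕ) (Q : (Fin n → H) → Prop) :
    {y : Fin n → G // Q (fun i => φ (y i))} ≃ {h : Fin n → H // Q h} × (Fin n → φ.ker) where
  toFun y := (⟨fun i => φ (y.1 i), y.2⟩,
    fun i => ⟨y.1 i * (Function.surjInv hs (φ (y.1 i)))⁻¹, by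
      simp [MonoidHom.mem_ker, Function.surjInv_eq hs]⟩)
  invFun p := ⟨fun i => (p.2 i).1 * Function.surjInv hs (p.1.1 i), by
      have hcomp : (fun i => φ ((p.2 i).1 * Function.surjInv hs (p.1.1 i))) = p.1.1 := by
        funext i
        rw [_root_.map_mul, (MonoidHom.mem_ker.mp (p.2 i).2), one_mul, Function.surjInv_eq hs]
      rw [hcomp]
      exact p.1.2⟩
  left_inv y := by
    apply Subtype.ext
    funext i
    show (y.1 i * (Function.surjInv hs (φ (y.1 i)))⁻¹) * Function.surjInv hs (φ (y.1 i)) = y.1 i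
    group
  right_inv p := by
    have hcomp : ∀ i, φ ((p.2 i).1 * Function.surjInv hs (p.1.1 i)) = p.1.1 i := by
      intro i
      rw [_root_.map_mul, (MonoidHom.mem_ker.mp (p.2 i).2), one_mul, Function.surjInv_eq hs]
    refine Prod.ext ?_ ?_
    · apply Subtype.ext
      funext i
      exact hcomp i
    · funext i
      apply Subtype.ext
      show ((p.2 i).1 * Function.surjInv hs (p.1.1 i)) *
        (Function.surjInv hs (φ ((p.2 i).1 * Function.surjInv hs (p.1.1 i))))⁻¹ = (p.2 i).1
      rw [hcomp i]
      group

def tupleEquiv (q n : ℕ) :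
    {x : Fin n → SU2 // (∀ i, x i ∈ genQ q) ∧ Subgroup.closure (Set.range x) = genQ q} ≃
    {y : Fin n → (genQ q) // Subgroup.closure (Set.range fun i => ((y i : SU2))) = genQ q} where
  toFun x := ⟨fun i => ⟨x.1 i, x.2.1 i⟩, by
    have : (Set.range fun i => ((⟨x.1 i, x.2.1 i⟩ : genQ q) : SU2)) = Set.range x.1 := rfl
    rw [this]
    exact x.2.2⟩
  invFun y := ⟨fun i => (y.1 i).1, fun i => (y.1 i).2, y.2⟩
  left_inv x := rfl
  right_inv y := rfl

end QCount

open QCount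

/-- For `r ≥ 3`, `n ≥ 1`, the number of `n`-tuples of elements of `Q_{2^r}` generating the whole
group `Q_{2^r}` is `2^{(r−2)n+1}(2^n − 1)(2^{n−1} − 1)`. -/
theorem stmt12 (r n : ℕ) (hr : 3 ≤ r) (hn : 1 ≤ n) :
    Nat.card {x : Fin n → SU2 //
        (∀ i, x i ∈ genQ (r - 1)) ∧ Subgroup.closure (Set.range x) = genQ (r - 1)} =
      2 ^ ((r - 2) * n + 1) * (2 ^ n - 1) * (2 ^ (n - 1) - 1) := by
  have hq : 2 ≤ r - 1 := by omega
  haveI : Finite (genQ (r - 1)) := finite_genQ _ (by omega)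
  have e1 := tupleEquiv (r - 1) n
  have e2 := Equiv.subtypeEquivRight (fun y => crit (r - 1) hq n y)
  have e3 := fiberEquiv (fQ (r - 1) hq) (fQ_surj _ hq) n P
  rw [Nat.card_congr ((e1.trans e2).trans e3), Nat.card_prod, card_P n, Nat.card_fun,
    card_ker (r - 1) hq, Nat.card_eq_fintype_card, Fintype.card_fin]
  have hidx : r - 1 - 1 = r - 2 := by omega
  rw [hidx]
  obtain ⟨b, hb⟩ : ∃ b, 2 ^ (n - 1) = b + 1 :=
    ⟨2 ^ (n - 1) - 1, by have := Nat.one_le_two_pow (n := n - 1); omega⟩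
  have e2n : 2 ^ n = 2 * (b + 1) := by
    rw [show n = (n - 1) + 1 by omega, pow_succ, hb]
    ring
  have e4n : 4 ^ n = (2 * (b + 1)) * (2 * (b + 1)) := by
    rw [show (4 : ℕ) = 2 * 2 by norm_num, Nat.mul_pow, e2n]
  have epow : ((2 : ℕ) ^ (r - 2)) ^ n = 2 ^ ((r - 2) * n) := (pow_mul 2 _ n).symm
  have epow2 : (2 : ℕ) ^ ((r - 2) * n + 1) = 2 ^ ((r - 2) * n) * 2 := pow_succ 2 _
  rw [hb, e2n, e4n, epow, epow2]
  have h1 : (2 * (b + 1)) * (2 * (b + 1)) - (3 * (2 * (b + 1)) - 2) =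
      2 * ((2 * (b + 1) - 1) * ((b + 1) - 1)) := by
    have hA : 2 * (b + 1) - 1 = 2 * b + 1 := by omega
    have hB : (b + 1) - 1 = b := by omega
    rw [hA, hB]
    have hC : (2 * (b + 1)) * (2 * (b + 1)) = 4 * (b * b) + 8 * b + 4 := by ring
    have hD : 2 * ((2 * b + 1) * b) = 4 * (b * b) + 2 * b := by ring
    omega
  rw [h1]
  generalize (2 * (b + 1) - 1) = u
  generalize ((b + 1) - 1) = v
  generalize (2 : ℕ) ^ ((r - 2) * n) = K
  ring

end
end

section
/- Let q ≥ 2, n ≥ 1, and let π : SU(2) → PU(2) be the quotient homomorphism. (i) If (y_1, …, y_n) ∈ SU(2)^n generates a subgroup of SU(2) of nilpotency class ≤ q, then (π(y_1), …, π(y_n)) generates a subgroup of PU(2) of nilpotency class ≤ q−1. (ii) Conversely, for every (x_1, …, x_n) ∈ PU(2)^n generating a subgroup of nilpotency class ≤ q−1, there exists (y_1, …, y_n) ∈ SU(2)^n with π(y_i) = x_i for all i such that y_1, …, y_n generate a subgroup of SU(2) of nilpotency class ≤ q. -/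
open Matrix Complex

noncomputable section

/-- The quotient homomorphism `π : SU(2) → PU(2)`. -/
def π : SU2 →* PU2 := QuotientGroup.mk' (Subgroup.center SU2)


-- helpers
lemma su2_mul_val (A B : SU2) : (A * B).1 = A.1 * B.1 := rfl

lemma su2_shape (A : SU2) :
    A.1 1 0 = -(starRingEnd ℂ) (A.1 0 1) ∧ A.1 1 1 = (starRingEnd ℂ) (A.1 0 0) := by
  obtain ⟨hu, hd⟩ := Matrix.mem_specialUnitaryGroup_iff.mp A.2
  have h1 : A.1 * A.1.adjugate = 1 := by
    rw [Matrix.mul_adjugate, hd, one_smul]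
  have h2 : star A.1 * A.1 = 1 := hu.1
  have hs : star A.1 = A.1.adjugate := by
    calc star A.1 = star A.1 * (A.1 * A.1.adjugate) := by rw [h1, mul_one]
      _ = (star A.1 * A.1) * A.1.adjugate := (mul_assoc _ _ _).symm
      _ = A.1.adjugate := by rw [h2, one_mul]
  rw [Matrix.adjugate_fin_two] at hs
  constructor
  · have := congrFun (congrFun hs 1) 0
    simp [Matrix.star_apply] at this
    rw [this, neg_neg]
  · have := congrFun (congrFun hs 1) 1
    simp [Matrix.star_apply] at this
    rw [← this, Complex.conj_conj]

lemma core_calc (a b p q r s : ℂ) (hz : b ≠ 0 ∨ a ≠ (starRingEnd ℂ) a)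
    (h1 : q * (starRingEnd ℂ) b = b * (starRingEnd ℂ) q)
    (h2 : b * (p - (starRingEnd ℂ) p) = q * (a - (starRingEnd ℂ) a))
    (h3 : s * (starRingEnd ℂ) b = b * (starRingEnd ℂ) s)
    (h4 : b * (r - (starRingEnd ℂ) r) = s * (a - (starRingEnd ℂ) a)) :
    s * (starRingEnd ℂ) q = q * (starRingEnd ℂ) s ∧
      q * (r - (starRingEnd ℂ) r) = s * (p - (starRingEnd ℂ) p) := by
  rcases eq_or_ne b 0 with hb | hb
  · subst hb
    have ha : a - (starRingEnd ℂ) a ≠ 0 := by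
      rcases hz with h | h
      · exact absurd rfl h
      · exact sub_ne_zero.mpr h
    have hq : q = 0 := by
      have := h2.symm
      simp at this
      rcases this with h | h
      · exact h
      · exact absurd h ha
    have hs : s = 0 := by
      have := h4.symm
      simp at this
      rcases this with h | h
      · exact h
      · exact absurd h ha
    simp [hq, hs]
  · constructor
    · apply mul_right_cancel₀ hb
      linear_combination q * h3 - s * h1
    · apply mul_right_cancel₀ hb
      linear_combination q * h4 - s * h2

lemma commute_entries {A B : SU2} (h : A * B = B * A) :
    B.1 0 1 * (starRingEnd ℂ) (A.1 0 1) = A.1 0 1 * (starRingEnd ℂ) (B.1 0 1) ∧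
      A.1 0 1 * (B.1 0 0 - (starRingEnd ℂ) (B.1 0 0)) =
        B.1 0 1 * (A.1 0 0 - (starRingEnd ℂ) (A.1 0 0)) := by
  have h' : A.1 * B.1 = B.1 * A.1 := congrArg Subtype.val h
  obtain ⟨hA10, hA11⟩ := su2_shape A
  obtain ⟨hB10, hB11⟩ := su2_shape B
  have e00 := congrFun (congrFun h' 0) 0
  have e01 := congrFun (congrFun h' 0) 1
  simp [Matrix.mul_apply, Fin.sum_univ_two, hA10, hA11, hB10, hB11] at e00 e01
  constructor
  · linear_combination e00
  · linear_combination -e01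

lemma su2_commute_of {A B : SU2}
    (h1 : B.1 0 1 * (starRingEnd ℂ) (A.1 0 1) = A.1 0 1 * (starRingEnd ℂ) (B.1 0 1))
    (h2 : A.1 0 1 * (B.1 0 0 - (starRingEnd ℂ) (B.1 0 0)) =
        B.1 0 1 * (A.1 0 0 - (starRingEnd ℂ) (A.1 0 0))) :
    A * B = B * A := by
  obtain ⟨hA10, hA11⟩ := su2_shape A
  obtain ⟨hB10, hB11⟩ := su2_shape B
  have hc1 := congrArg (starRingEnd ℂ) h1
  have hc2 := congrArg (starRingEnd ℂ) h2
  simp only [_root_.map_mul, map_sub, Complex.conj_conj] at hc1 hc2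
  apply Subtype.ext
  show A.1 * B.1 = B.1 * A.1
  ext i j
  fin_cases i <;> fin_cases j <;>
    simp [Matrix.mul_apply, Fin.sum_univ_two, hA10, hA11, hB10, hB11]
  · linear_combination h1
  · linear_combination -h2
  · linear_combination hc2
  · linear_combination hc1

lemma central_of {A : SU2} (h01 : A.1 0 1 = 0)
    (h00 : A.1 0 0 = (starRingEnd ℂ) (A.1 0 0)) : A ∈ Subgroup.center SU2 := by
  rw [Subgroup.mem_center_iff]
  intro g
  obtain ⟨hA10, hA11⟩ := su2_shape A
  apply Subtype.ext
  show g.1 * A.1 = A.1 * g.1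
  ext i j
  fin_cases i <;> fin_cases j <;>
    simp [Matrix.mul_apply, Fin.sum_univ_two, hA10, hA11, h01, ← h00, mul_comm]

lemma lcs_succ {G : Type*} [Group G] (H : Subgroup G) (k : ℕ) :
    lcs H (k + 1) = ⁅lcs H k, H⁆ := rfl

lemma lcs_le_self {G : Type*} [Group G] (H : Subgroup G) : ∀ k, lcs H k ≤ H
  | 0 => le_rfl
  | (k + 1) => by
    rw [lcs_succ]
    rw [Subgroup.commutator_le]
    intro g₁ h₁ g₂ h₂
    rw [commutatorElement_def]
    exact mul_mem (mul_mem (mul_mem (lcs_le_self H k h₁) h₂)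
      (inv_mem (lcs_le_self H k h₁))) (inv_mem h₂)

lemma lcs_eq_bot_of_one {G : Type*} [Group G] (H : Subgroup G) (h : lcs H 1 = ⊥) :
    ∀ k, 1 ≤ k → lcs H k = ⊥ := by
  intro k hk
  induction k with
  | zero => omega
  | succ m ih =>
    rcases Nat.eq_or_lt_of_le hk with h' | h'
    · rw [← h']; simpa using h
    · have hm : lcs H m = ⊥ := ih (by omega)
      rw [lcs_succ, eq_bot_iff, Subgroup.commutator_le]
      intro g₁ h₁ g₂ _
      rw [hm] at h₁
      rw [Subgroup.mem_bot] at h₁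
      subst h₁
      simp [Subgroup.mem_bot, commutatorElement_def]

lemma lcs_map {G G' : Type*} [Group G] [Group G'] (f : G →* G') (H : Subgroup G) :
    ∀ k, lcs (H.map f) k = (lcs H k).map f
  | 0 => rfl
  | (k + 1) => by rw [lcs_succ, lcs_succ, lcs_map f H k, Subgroup.map_commutator]

lemma lcs_le_center (H : Subgroup SU2) (k : ℕ) (hk : 1 ≤ k) (h : lcs H (k + 1) = ⊥) :
    lcs H k ≤ Subgroup.center SU2 := by
  have hcomm : ∀ z ∈ lcs H k, ∀ g ∈ H, z * g = g * z := by
    intro z hz g hg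
    have : @Bracket.bracket SU2 SU2 commutatorElement z g ∈ (⊥ : Subgroup SU2) := by
      rw [← h, lcs_succ]
      exact Subgroup.commutator_mem_commutator hz hg
    rw [Subgroup.mem_bot] at this
    exact commutatorElement_eq_one_iff_commute.mp this
  by_cases hab : ∀ b ∈ H, ∀ c ∈ H, b * c = c * b
  · have h1 : lcs H 1 = ⊥ := by
      rw [lcs_succ, eq_bot_iff, Subgroup.commutator_le]
      intro g₁ h₁ g₂ h₂
      rw [Subgroup.mem_bot, commutatorElement_eq_one_iff_commute]
      exact hab g₁ (lcs_le_self H 0 h₁) g₂ h₂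
    rw [lcs_eq_bot_of_one H h1 k hk]
    exact bot_le
  · push_neg at hab
    obtain ⟨b, hb, c, hc, hbc⟩ := hab
    intro z hz
    by_cases h01 : z.1 0 1 = 0
    · by_cases h00 : z.1 0 0 = (starRingEnd ℂ) (z.1 0 0)
      · exact central_of h01 h00
      · exfalso
        apply hbc
        obtain ⟨e1, e2⟩ := commute_entries (hcomm z hz b hb)
        obtain ⟨e3, e4⟩ := commute_entries (hcomm z hz c hc)
        obtain ⟨g1, g2⟩ := core_calc (z.1 0 0) (z.1 0 1) (b.1 0 0) (b.1 0 1)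
          (c.1 0 0) (c.1 0 1) (Or.inr h00) e1 e2 e3 e4
        exact su2_commute_of g1 g2
    · exfalso
      apply hbc
      obtain ⟨e1, e2⟩ := commute_entries (hcomm z hz b hb)
      obtain ⟨e3, e4⟩ := commute_entries (hcomm z hz c hc)
      obtain ⟨g1, g2⟩ := core_calc (z.1 0 0) (z.1 0 1) (b.1 0 0) (b.1 0 1)
        (c.1 0 0) (c.1 0 1) (Or.inl h01) e1 e2 e3 e4
      exact su2_commute_of g1 g2

/-- (i) A tuple generating a subgroup of `SU(2)` of nilpotency class `≤ q` maps under `π` to a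
tuple generating a subgroup of `PU(2)` of class `≤ q-1`; (ii) conversely every tuple in `PU(2)`
generating a subgroup of class `≤ q-1` lifts to a tuple in `SU(2)` generating a subgroup of
class `≤ q`. -/
theorem stmt14 (q n : ℕ) (hq : 2 ≤ q) (hn : 1 ≤ n) :
    (∀ y : Fin n → SU2, lcs (Subgroup.closure (Set.range y)) q = ⊥ →
      lcs (Subgroup.closure (Set.range fun i => π (y i))) (q - 1) = ⊥) ∧
    (∀ x : Fin n → PU2, lcs (Subgroup.closure (Set.range x)) (q - 1) = ⊥ →
      ∃ y : Fin n → SU2, (∀ i, π (y i) = x i) ∧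
        lcs (Subgroup.closure (Set.range y)) q = ⊥) := by
  constructor
  · intro y hy
    set H := Subgroup.closure (Set.range y) with hH
    have hcen : lcs H (q - 1) ≤ Subgroup.center SU2 := by
      apply lcs_le_center H (q - 1) (by omega)
      rw [show q - 1 + 1 = q by omega]
      exact hy
    have himg : Subgroup.closure (Set.range fun i => π (y i)) = H.map π := by
      rw [MonoidHom.map_closure, ← Set.range_comp]
      rfl
    rw [himg, lcs_map]
    rw [Subgroup.map_eq_bot_iff]
    intro z hz
    have := hcen hz
    show z ∈ MonoidHom.ker π
    rw [π, QuotientGroup.ker_mk']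
    exact this
  · intro x hx
    have hsurj : Function.Surjective π := QuotientGroup.mk'_surjective _
    choose y hy using fun i => hsurj (x i)
    refine ⟨y, hy, ?_⟩
    set K := Subgroup.closure (Set.range y) with hK
    have hmap : K.map π = Subgroup.closure (Set.range x) := by
      rw [hK, MonoidHom.map_closure, ← Set.range_comp,
        show π ∘ y = x from funext hy]
    have hker : lcs K (q - 1) ≤ Subgroup.center SU2 := by
      have : (lcs K (q - 1)).map π = ⊥ := by
        rw [← lcs_map, hmap, hx]
      rw [Subgroup.map_eq_bot_iff, π, QuotientGroup.ker_mk'] at this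
      exact this
    rw [show q = (q - 1) + 1 by omega, lcs_succ, eq_bot_iff, Subgroup.commutator_le]
    intro g₁ h₁ g₂ _
    rw [Subgroup.mem_bot, commutatorElement_eq_one_iff_commute]
    exact (Subgroup.mem_center_iff.mp (hker h₁) g₂).symm

end
end

section
/- Let q ≥ 2 and n ≥ 1. The map from (S¹)^n × Hom(F_n/Γ^{q+1}_n, SU(2)) to Hom(F_n/Γ^{q+1}_n, U(2)) sending ((λ_1, …, λ_n), (x_1, …, x_n)) to (λ_1·x_1, …, λ_n·x_n) is a continuous surjection, and it descends to a homeomorphism from the quotient of (S¹)^n × Hom(F_n/Γ^{q+1}_n, SU(2)) by the action of {±1}^n, where ε = (ε_1, …, ε_n) acts by ε·((λ_i), (x_i)) = ((ε_i λ_i), (ε_i x_i)), onto Hom(F_n/Γ^{q+1}_n, U(2)). -/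
open Matrix Complex

noncomputable section

abbrev U2 := Matrix.unitaryGroup (Fin 2) ℂ

/-- `Hom(F_n/Γ^{q+1}_n, SU(2))`: tuples generating a subgroup of nilpotency class at most `q`. -/
abbrev NilSU2 (n q : ℕ) : Type :=
  {x : Fin n → SU2 // lcs (Subgroup.closure (Set.range x)) q = ⊥}

/-- `Hom(F_n/Γ^{q+1}_n, U(2))`. -/
abbrev NilU2 (n q : ℕ) : Type :=
  {x : Fin n → U2 // lcs (Subgroup.closure (Set.range x)) q = ⊥}

/-- The relation identifying `((λ_i), (x_i))` with `((ε_i λ_i), (ε_i x_i))` for signs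
`ε ∈ {±1}^n`. -/
def signRel (n q : ℕ) (p p' : (Fin n → Circle) × NilSU2 n q) : Prop :=
  ∃ ε : Fin n → ℤˣ,
    (∀ i, (p'.1 i : ℂ) = ((ε i : ℤ) : ℂ) * (p.1 i : ℂ)) ∧
    (∀ i, ((p'.2.1 i : Matrix (Fin 2) (Fin 2) ℂ)) =
      ((ε i : ℤ) : ℂ) • (p.2.1 i : Matrix (Fin 2) (Fin 2) ℂ))


/-! ### Auxiliary material -/

section AuxGroupLemmas
variable {G : Type*} [Group G]
open scoped commutatorElement

lemma aux_comm_central_right {z : G} (hz : z ∈ Subgroup.center G) (a b : G) :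
    ⁅a, z * b⁆ = ⁅a, b⁆ := by
  have h := Subgroup.mem_center_iff.mp hz
  show a * (z * b) * a⁻¹ * (z * b)⁻¹ = a * b * a⁻¹ * b⁻¹
  calc a * (z * b) * a⁻¹ * (z * b)⁻¹ = (a * z) * (b * a⁻¹ * b⁻¹ * z⁻¹) := by group
    _ = (z * a) * (b * a⁻¹ * b⁻¹ * z⁻¹) := by rw [h a]
    _ = (z * (a * b * a⁻¹ * b⁻¹)) * z⁻¹ := by group
    _ = ((a * b * a⁻¹ * b⁻¹) * z) * z⁻¹ := by rw [← h (a * b * a⁻¹ * b⁻¹)]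
    _ = a * b * a⁻¹ * b⁻¹ := by group

lemma aux_exists_central_shift {S T : Set G}
    (hST : ∀ s ∈ S, ∃ z ∈ Subgroup.center G, z * s ∈ Subgroup.closure T) :
    ∀ g ∈ Subgroup.closure S, ∃ z ∈ Subgroup.center G, z * g ∈ Subgroup.closure T := by
  intro g hg
  induction hg using Subgroup.closure_induction with
  | mem x hx => exact hST x hx
  | one => exact ⟨1, Subgroup.one_mem _, by simpa using Subgroup.one_mem _⟩
  | mul x y hx hy ihx ihy =>
      obtain ⟨z, hz, hzx⟩ := ihx
      obtain ⟨v, hv, hvy⟩ := ihy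
      refine ⟨z * v, mul_mem hz hv, ?_⟩
      have h := Subgroup.mem_center_iff.mp hv
      have e : z * v * (x * y) = (z * x) * (v * y) := by
        calc z * v * (x * y) = z * (v * x) * y := by group
          _ = z * (x * v) * y := by rw [← h x]
          _ = (z * x) * (v * y) := by group
      rw [e]; exact mul_mem hzx hvy
  | inv x hx ihx =>
      obtain ⟨z, hz, hzx⟩ := ihx
      refine ⟨z⁻¹, inv_mem hz, ?_⟩
      have h := Subgroup.mem_center_iff.mp (inv_mem hz : z⁻¹ ∈ Subgroup.center G)
      have e : z⁻¹ * x⁻¹ = (z * x)⁻¹ := by rw [_root_.mul_inv_rev, ← h x⁻¹]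
      rw [e]; exact inv_mem hzx

lemma aux_commutator_right_eq {A H H' : Subgroup G}
    (h1 : ∀ g ∈ H', ∃ z ∈ Subgroup.center G, z * g ∈ H)
    (h2 : ∀ g ∈ H, ∃ z ∈ Subgroup.center G, z * g ∈ H') :
    ⁅A, H'⁆ = ⁅A, H⁆ := by
  apply le_antisymm <;> rw [Subgroup.commutator_le] <;> intro a ha g hg
  · obtain ⟨z, hz, hzg⟩ := h1 g hg
    rw [← aux_comm_central_right hz a g]
    exact Subgroup.commutator_mem_commutator ha hzg
  · obtain ⟨z, hz, hzg⟩ := h2 g hg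
    rw [← aux_comm_central_right hz a g]
    exact Subgroup.commutator_mem_commutator ha hzg

lemma aux_lcs_eq_of_central {H H' : Subgroup G}
    (h1 : ∀ g ∈ H', ∃ z ∈ Subgroup.center G, z * g ∈ H)
    (h2 : ∀ g ∈ H, ∃ z ∈ Subgroup.center G, z * g ∈ H') :
    ∀ k, lcs H' (k + 1) = lcs H (k + 1) := by
  intro k
  induction k with
  | zero =>
      show ⁅H', H'⁆ = ⁅H, H⁆
      rw [aux_commutator_right_eq h1 h2, Subgroup.commutator_comm,
        aux_commutator_right_eq h1 h2, Subgroup.commutator_comm]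
  | succ k ih =>
      show ⁅lcs H' (k + 1), H'⁆ = ⁅lcs H (k + 1), H⁆
      rw [ih, aux_commutator_right_eq h1 h2]

lemma aux_lcs_map {G' : Type*} [Group G'] (φ : G →* G') (H : Subgroup G) :
    ∀ k, lcs (H.map φ) k = (lcs H k).map φ := by
  intro k
  induction k with
  | zero => rfl
  | succ k ih =>
      show ⁅lcs (H.map φ) k, H.map φ⁆ = (⁅lcs H k, H⁆).map φ
      rw [ih, Subgroup.map_commutator]

lemma aux_map_eq_bot_iff {G' : Type*} [Group G'] {φ : G →* G'} (hφ : Function.Injective φ)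
    (H : Subgroup G) : H.map φ = ⊥ ↔ H = ⊥ := by
  rw [Subgroup.map_eq_bot_iff, (MonoidHom.ker_eq_bot_iff φ).mpr hφ, le_bot_iff]

end AuxGroupLemmas

open Topology

/-! ### SU(2), U(2) specifics -/

def ιSU : SU2 →* U2 where
  toFun x := ⟨x.1, x.2.1⟩
  map_one' := rfl
  map_mul' _ _ := rfl

lemma ιSU_injective : Function.Injective ιSU := fun a b h =>
  Subtype.ext (congrArg (Subtype.val : U2 → _) h)

lemma circle_mul_star (c : Circle) : (c : ℂ) * star (c : ℂ) = 1 := by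
  have h1 : star (c : ℂ) = ((c⁻¹ : Circle) : ℂ) := (Circle.coe_inv_eq_conj c).symm
  rw [h1, ← Circle.coe_mul, mul_inv_cancel, Circle.coe_one]

lemma smul_mem_u2 (c : Circle) {M : Matrix (Fin 2) (Fin 2) ℂ}
    (hM : M ∈ Matrix.unitaryGroup (Fin 2) ℂ) :
    (c : ℂ) • M ∈ Matrix.unitaryGroup (Fin 2) ℂ := by
  rw [Matrix.mem_unitaryGroup_iff] at hM ⊢
  rw [star_smul, Matrix.smul_mul, Matrix.mul_smul, smul_smul, hM, circle_mul_star, one_smul]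

def scU (c : Circle) : U2 := ⟨(c : ℂ) • 1, smul_mem_u2 c (one_mem _)⟩

lemma scU_center (c : Circle) : scU c ∈ Subgroup.center U2 := by
  rw [Subgroup.mem_center_iff]
  intro g
  apply Subtype.ext
  show g.1 * ((c : ℂ) • 1) = ((c : ℂ) • 1) * g.1
  rw [Matrix.mul_smul, Matrix.smul_mul, mul_one, one_mul]

def fval (c : Circle) (x : SU2) : U2 := ⟨(c : ℂ) • x.1, smul_mem_u2 c x.2.1⟩

lemma fval_eq (c : Circle) (x : SU2) : fval c x = scU c * ιSU x := by
  apply Subtype.ext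
  show (c : ℂ) • x.1 = ((c : ℂ) • 1) * x.1
  rw [Matrix.smul_mul, one_mul]

lemma key_iff {n : ℕ} (q : ℕ) (hq : 1 ≤ q) (lam : Fin n → Circle) (x : Fin n → SU2) :
    lcs (Subgroup.closure (Set.range fun i => fval (lam i) (x i))) q = ⊥ ↔
      lcs (Subgroup.closure (Set.range x)) q = ⊥ := by
  obtain ⟨k, rfl⟩ : ∃ k, q = k + 1 := ⟨q - 1, by omega⟩
  have h1 : ∀ g ∈ Subgroup.closure (Set.range fun i => fval (lam i) (x i)),
      ∃ z ∈ Subgroup.center U2, z * g ∈ Subgroup.closure (Set.range fun i => ιSU (x i)) := by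
    apply aux_exists_central_shift
    rintro s ⟨i, rfl⟩
    exact ⟨(scU (lam i))⁻¹, inv_mem (scU_center (lam i)), by
      show (scU (lam i))⁻¹ * fval (lam i) (x i) ∈ _
      rw [fval_eq, inv_mul_cancel_left]; exact Subgroup.subset_closure ⟨i, rfl⟩⟩
  have h2 : ∀ g ∈ Subgroup.closure (Set.range fun i => ιSU (x i)),
      ∃ z ∈ Subgroup.center U2,
        z * g ∈ Subgroup.closure (Set.range fun i => fval (lam i) (x i)) := by
    apply aux_exists_central_shift
    rintro s ⟨i, rfl⟩
    exact ⟨scU (lam i), scU_center (lam i), by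
      show scU (lam i) * ιSU (x i) ∈ _
      rw [← fval_eq]; exact Subgroup.subset_closure ⟨i, rfl⟩⟩
  rw [aux_lcs_eq_of_central h1 h2 k]
  have hr : Set.range (fun i => ιSU (x i)) = ιSU '' Set.range x := by
    rw [← Set.range_comp]; rfl
  rw [hr, ← MonoidHom.map_closure, aux_lcs_map, aux_map_eq_bot_iff ιSU_injective]

/-! ### Compactness of SU(2) -/

lemma u2_entry_le {M : Matrix (Fin 2) (Fin 2) ℂ}
    (hM : M ∈ Matrix.unitaryGroup (Fin 2) ℂ) (i j : Fin 2) : ‖M i j‖ ≤ 1 := by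
  have h := Matrix.mem_unitaryGroup_iff.mp hM
  have h2 := congrFun (congrFun h i) i
  rw [Matrix.mul_apply, Fin.sum_univ_two, Matrix.star_apply, Matrix.star_apply,
    Matrix.one_apply_eq] at h2
  have h3 : Complex.normSq (M i 0) + Complex.normSq (M i 1) = 1 := by
    have h4 := congrArg Complex.re h2
    simpa [Complex.star_def, Complex.mul_conj] using h4
  fin_cases j <;> simp only [Fin.zero_eta, Fin.mk_one, Fin.isValue] <;>
    nlinarith [Complex.sq_norm (M i 0), Complex.sq_norm (M i 1),
      Complex.normSq_nonneg (M i 0), Complex.normSq_nonneg (M i 1),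
      norm_nonneg (M i 0), norm_nonneg (M i 1)]

instance : CompactSpace SU2 := by
  have hsub : (Matrix.specialUnitaryGroup (Fin 2) ℂ : Set (Matrix (Fin 2) (Fin 2) ℂ)) ⊆
      Set.univ.pi fun _ : Fin 2 => Set.univ.pi fun _ : Fin 2 => Metric.closedBall (0 : ℂ) 1 := by
    intro M hM
    refine Set.mem_univ_pi.mpr fun i => Set.mem_univ_pi.mpr fun j => ?_
    rw [Metric.mem_closedBall, dist_zero_right]
    exact u2_entry_le (Matrix.mem_specialUnitaryGroup_iff.mp hM).1 i j
  have hcl : IsClosed (Matrix.specialUnitaryGroup (Fin 2) ℂ :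
      Set (Matrix (Fin 2) (Fin 2) ℂ)) := by
    have : (Matrix.specialUnitaryGroup (Fin 2) ℂ : Set (Matrix (Fin 2) (Fin 2) ℂ)) =
        {M | M * star M = 1} ∩ {M | M.det = 1} := by
      ext M
      simp [Matrix.mem_specialUnitaryGroup_iff, Matrix.mem_unitaryGroup_iff,
        Set.mem_inter_iff]
    rw [this]
    exact (isClosed_eq (continuous_id.matrix_mul continuous_star) continuous_const).inter
      (isClosed_eq (continuous_id.matrix_det) continuous_const)
  have hK : IsCompact (Set.univ.pi fun _ : Fin 2 =>
      Set.univ.pi fun _ : Fin 2 => Metric.closedBall (0 : ℂ) 1) :=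
    isCompact_univ_pi fun _ => isCompact_univ_pi fun _ => isCompact_closedBall _ _
  exact isCompact_iff_compactSpace.mp (hK.of_isClosed_subset hcl hsub)

/-! ### Square roots of determinants -/

lemma u2_det_abs (u : U2) : ‖Matrix.det u.1‖ = 1 := by
  have h := Matrix.mem_unitaryGroup_iff.mp u.2
  have hd : (u.1).det * star (u.1).det = 1 := by
    have h' := congrArg Matrix.det h
    rwa [Matrix.det_mul, Matrix.star_eq_conjTranspose, Matrix.det_conjTranspose,
      Matrix.det_one] at h'
  have hsq : ‖(u.1).det‖ ^ 2 = 1 := by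
    rw [Complex.sq_norm]
    have := congrArg Complex.re hd
    simpa [Complex.mul_conj] using this
  nlinarith [norm_nonneg ((u.1).det)]

lemma exists_sqrt_det (u : U2) : ∃ c : Circle, (c : ℂ) ^ 2 = Matrix.det u.1 := by
  refine ⟨Circle.exp ((Matrix.det u.1).arg / 2), ?_⟩
  rw [Circle.coe_exp]
  have h1 : Complex.exp (((Matrix.det u.1).arg / 2 : ℝ) * Complex.I) ^ 2 =
      Complex.exp (((Matrix.det u.1).arg : ℝ) * Complex.I) := by
    rw [sq, ← Complex.exp_add]
    congr 1
    push_cast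
    ring
  rw [h1]
  conv_rhs => rw [← Complex.norm_mul_exp_arg_mul_I (Matrix.det u.1)]
  rw [u2_det_abs u, Complex.ofReal_one, one_mul]


/-! ### The sign relation and fibers -/

lemma aux_eps_cast_sq (e : ℤˣ) : (((e : ℤ) : ℂ)) * (((e : ℤ) : ℂ)) = 1 := by
  rcases Int.units_eq_one_or e with rfl | rfl <;> norm_num

lemma aux_eq_of_signRel {n q : ℕ} {p p' : (Fin n → Circle) × NilSU2 n q}
    (h : signRel n q p p') (i : Fin n) :
    fval (p.1 i) (p.2.1 i) = fval (p'.1 i) (p'.2.1 i) := by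
  obtain ⟨ε, h1, h2⟩ := h
  apply Subtype.ext
  show (p.1 i : ℂ) • (p.2.1 i : Matrix (Fin 2) (Fin 2) ℂ) =
    (p'.1 i : ℂ) • (p'.2.1 i : Matrix (Fin 2) (Fin 2) ℂ)
  rw [h1 i, h2 i, smul_smul]
  congr 1
  rw [show ((ε i : ℤ) : ℂ) * (p.1 i : ℂ) * ((ε i : ℤ) : ℂ) =
    (((ε i : ℤ) : ℂ) * ((ε i : ℤ) : ℂ)) * (p.1 i : ℂ) from by ring, aux_eps_cast_sq, one_mul]

lemma aux_signRel_of_eq {n q : ℕ} (p p' : (Fin n → Circle) × NilSU2 n q)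
    (h : ∀ i, fval (p.1 i) (p.2.1 i) = fval (p'.1 i) (p'.2.1 i)) :
    signRel n q p p' := by
  classical
  have hM : ∀ i, ((p'.2.1 i : Matrix (Fin 2) (Fin 2) ℂ)) =
      (((p'.1 i : ℂ))⁻¹ * (p.1 i : ℂ)) • (p.2.1 i : Matrix (Fin 2) (Fin 2) ℂ) := by
    intro i
    have hv : (p.1 i : ℂ) • (p.2.1 i : Matrix (Fin 2) (Fin 2) ℂ) =
        (p'.1 i : ℂ) • (p'.2.1 i : Matrix (Fin 2) (Fin 2) ℂ) :=
      congrArg Subtype.val (h i)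
    have hb : ((p'.1 i : ℂ)) ≠ 0 := Circle.coe_ne_zero _
    calc (p'.2.1 i : Matrix (Fin 2) (Fin 2) ℂ)
        = ((p'.1 i : ℂ))⁻¹ • ((p'.1 i : ℂ) • (p'.2.1 i : Matrix (Fin 2) (Fin 2) ℂ)) := by
          rw [smul_smul, inv_mul_cancel₀ hb, one_smul]
      _ = ((p'.1 i : ℂ))⁻¹ • ((p.1 i : ℂ) • (p.2.1 i : Matrix (Fin 2) (Fin 2) ℂ)) := by
          rw [hv]
      _ = _ := by rw [smul_smul]
  have hc2 : ∀ i, (((p'.1 i : ℂ))⁻¹ * (p.1 i : ℂ)) * (((p'.1 i : ℂ))⁻¹ * (p.1 i : ℂ)) = 1 := by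
    intro i
    have hdet' : ((p'.2.1 i : Matrix (Fin 2) (Fin 2) ℂ)).det = 1 :=
      (Matrix.mem_specialUnitaryGroup_iff.mp (p'.2.1 i).2).2
    have hdet : ((p.2.1 i : Matrix (Fin 2) (Fin 2) ℂ)).det = 1 :=
      (Matrix.mem_specialUnitaryGroup_iff.mp (p.2.1 i).2).2
    have h3 := hdet'
    rw [hM i, Matrix.det_smul, hdet, Fintype.card_fin, mul_one, sq] at h3
    exact h3
  have hor : ∀ i, ((p'.1 i : ℂ))⁻¹ * (p.1 i : ℂ) = 1 ∨
      ((p'.1 i : ℂ))⁻¹ * (p.1 i : ℂ) = -1 := fun i => mul_self_eq_one_iff.mp (hc2 i)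
  refine ⟨fun i => if ((p'.1 i : ℂ))⁻¹ * (p.1 i : ℂ) = 1 then 1 else -1, ?_, ?_⟩
  · intro i
    beta_reduce
    have hb : ((p'.1 i : ℂ)) ≠ 0 := Circle.coe_ne_zero _
    rcases hor i with h1 | h1
    · rw [if_pos h1]
      simp only [Units.val_one, Int.cast_one, one_mul]
      exact (inv_mul_eq_one₀ hb).mp h1
    · rw [if_neg (by rw [h1]; norm_num)]
      simp only [Units.val_neg, Units.val_one, Int.cast_neg, Int.cast_one, neg_mul, one_mul]
      have h2 : (p.1 i : ℂ) = -(p'.1 i : ℂ) := by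
        have h3 := congrArg (fun z => (p'.1 i : ℂ) * z) h1
        simpa [mul_inv_cancel_left₀ hb] using h3
      rw [h2, neg_neg]
  · intro i
    beta_reduce
    rcases hor i with h1 | h1
    · rw [if_pos h1, hM i, h1]
      norm_num
    · rw [if_neg (by rw [h1]; norm_num), hM i, h1]
      norm_num [Units.val_neg]

/-! ### The map and its continuity -/

def auxF (n : ℕ) : (Fin n → Circle) × (Fin n → SU2) → (Fin n → U2) :=
  fun p i => fval (p.1 i) (p.2 i)

lemma auxF_continuous (n : ℕ) : Continuous (auxF n) := by
  apply continuous_pi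
  intro i
  apply Continuous.subtype_mk
  exact (continuous_subtype_val.comp ((continuous_apply i).comp continuous_fst)).smul
    (continuous_subtype_val.comp ((continuous_apply i).comp continuous_snd) :
      Continuous fun p : (Fin n → Circle) × (Fin n → SU2) => ((p.2 i : SU2) : Matrix (Fin 2) (Fin 2) ℂ))


/-- For `q ≥ 2`, `n ≥ 1`, the map
`(S¹)^n × Hom(F_n/Γ^{q+1}_n, SU(2)) → Hom(F_n/Γ^{q+1}_n, U(2))`,
`((λ_i), (x_i)) ↦ (λ_i x_i)`, is a continuous surjection which descends to a homeomorphism from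
the quotient by the `{±1}^n`-action. -/
theorem stmt15 (q n : ℕ) (hq : 2 ≤ q) (hn : 1 ≤ n) :
    ∃ f : (Fin n → Circle) × NilSU2 n q → NilU2 n q,
      (∀ lam : Fin n → Circle, ∀ x : NilSU2 n q, ∀ i,
        ((f (lam, x)).1 i : Matrix (Fin 2) (Fin 2) ℂ) =
          (lam i : ℂ) • (x.1 i : Matrix (Fin 2) (Fin 2) ℂ)) ∧
      Continuous f ∧ Function.Surjective f ∧
      ∃ h : Quot (signRel n q) ≃ₜ NilU2 n q, ∀ p, h (Quot.mk _ p) = f p := by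
  classical
  have hq1 : 1 ≤ q := by omega
  have hkey : ∀ (lam : Fin n → Circle) (x : Fin n → SU2),
      lcs (Subgroup.closure (Set.range (auxF n (lam, x)))) q = ⊥ ↔
        lcs (Subgroup.closure (Set.range x)) q = ⊥ := fun lam x => key_iff q hq1 lam x
  set f : (Fin n → Circle) × NilSU2 n q → NilU2 n q :=
    fun p => ⟨auxF n (p.1, p.2.1), (hkey p.1 p.2.1).mpr p.2.2⟩ with hfdef
  have hcont : Continuous f :=
    Continuous.subtype_mk ((auxF_continuous n).comp
      (continuous_fst.prodMk (continuous_subtype_val.comp continuous_snd))) _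
  have hsurj : Function.Surjective f := by
    rintro ⟨u, hu⟩
    set lam : Fin n → Circle := fun i => Classical.choose (exists_sqrt_det (u i)) with hlam
    have hlam2 : ∀ i, ((lam i : ℂ)) ^ 2 = Matrix.det (u i).1 :=
      fun i => Classical.choose_spec (exists_sqrt_det (u i))
    have hdet0 : ∀ i, Matrix.det (u i).1 ≠ 0 := by
      intro i
      rw [← hlam2 i]
      exact pow_ne_zero _ (Circle.coe_ne_zero _)
    have hxmem : ∀ i, (((lam i)⁻¹ : Circle) : ℂ) • (u i).1 ∈
        Matrix.specialUnitaryGroup (Fin 2) ℂ := by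
      intro i
      rw [Matrix.mem_specialUnitaryGroup_iff]
      refine ⟨smul_mem_u2 _ (u i).2, ?_⟩
      show ((((lam i)⁻¹ : Circle) : ℂ) • (u i).1).det = 1
      rw [Matrix.det_smul, Fintype.card_fin, Circle.coe_inv, inv_pow, hlam2 i,
        inv_mul_cancel₀ (hdet0 i)]
    set x : Fin n → SU2 := fun i => ⟨_, hxmem i⟩ with hx
    have hfx : ∀ i, fval (lam i) (x i) = u i := by
      intro i
      apply Subtype.ext
      show (lam i : ℂ) • ((((lam i)⁻¹ : Circle) : ℂ) • (u i).1) = (u i).1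
      rw [smul_smul, Circle.coe_inv, mul_inv_cancel₀ (Circle.coe_ne_zero _), one_smul]
    have hax : auxF n (lam, x) = u := funext hfx
    have hnx : lcs (Subgroup.closure (Set.range x)) q = ⊥ :=
      (hkey lam x).mp (by rw [hax]; exact hu)
    exact ⟨(lam, ⟨x, hnx⟩), Subtype.ext hax⟩
  have hclosed : IsClosedMap f := by
    intro K hK
    have hg : IsInducing (Prod.map (id : (Fin n → Circle) → (Fin n → Circle))
        (Subtype.val : NilSU2 n q → (Fin n → SU2))) :=
      IsInducing.id.prodMap IsInducing.subtypeVal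
    obtain ⟨V, hVcl, hVK⟩ := hg.isClosed_iff.mp hK
    have hT : IsClosed (auxF n '' V) := ((hVcl.isCompact).image (auxF_continuous n)).isClosed
    have himg : f '' K = Subtype.val ⁻¹' (auxF n '' V) := by
      ext y
      constructor
      · rintro ⟨p, hp, rfl⟩
        refine ⟨(p.1, p.2.1), ?_, rfl⟩
        rw [← hVK] at hp
        exact hp
      · rintro ⟨v, hvV, hvy⟩
        have hnx : lcs (Subgroup.closure (Set.range v.2)) q = ⊥ := by
          apply (hkey v.1 v.2).mp
          rw [show auxF n (v.1, v.2) = y.1 from hvy]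
          exact y.2
        refine ⟨(v.1, ⟨v.2, hnx⟩), ?_, Subtype.ext hvy⟩
        rw [← hVK]
        exact hvV
    rw [himg]
    exact hT.preimage continuous_subtype_val
  have hQuot : IsQuotientMap f := hclosed.isQuotientMap hcont hsurj
  have hsound : ∀ p p', signRel n q p p' → f p = f p' := by
    intro p p' hrel
    exact Subtype.ext (funext (aux_eq_of_signRel hrel))
  refine ⟨f, fun lam x i => rfl, hcont, hsurj, ?_⟩
  have key2 : ∀ pa pb : (Fin n → Circle) × NilSU2 n q, f pa = f pb →
      Quot.mk (signRel n q) pa = Quot.mk (signRel n q) pb := fun pa pb hab =>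
    Quot.sound (aux_signRel_of_eq pa pb fun i => congrFun (congrArg Subtype.val hab) i)
  have hinj : Function.Injective (Quot.lift f hsound) := by
    intro a b
    induction a using Quot.ind
    induction b using Quot.ind
    exact key2 _ _
  have hsurj' : Function.Surjective (Quot.lift f hsound) := by
    intro y
    obtain ⟨p, hp⟩ := hsurj y
    exact ⟨Quot.mk _ p, hp⟩
  set e : Quot (signRel n q) ≃ NilU2 n q :=
    Equiv.ofBijective (Quot.lift f hsound) ⟨hinj, hsurj'⟩ with he
  have hecont : Continuous (e : Quot (signRel n q) → NilU2 n q) :=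
    continuous_quot_lift hsound hcont
  have heopen : IsOpenMap (e : Quot (signRel n q) → NilU2 n q) := by
    intro U hU
    have hpre : f ⁻¹' (e '' U) = Quot.mk (signRel n q) ⁻¹' U := by
      ext p
      simp only [Set.mem_preimage]
      constructor
      · rintro ⟨u, hu, hu2⟩
        have hux : u = Quot.mk (signRel n q) p := hinj hu2
        rwa [hux] at hu
      · intro hp
        exact ⟨Quot.mk _ p, hp, rfl⟩
    apply hQuot.isOpen_preimage.mp
    rw [hpre]
    exact hU.preimage continuous_quot_mk
  exact ⟨e.toHomeomorphOfContinuousOpen hecont heopen, fun p => rfl⟩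

end
end

section
/- Let m ≥ 1 and let (x_1, …, x_n) be an n-tuple in U(m) generating a subgroup of nilpotency class ≤ 2. Then there exist g ∈ U(m) and an equivalence relation ∼ on the index set {1, …, m} such that: (i) for every k, the matrix g x_k g⁻¹ is block with respect to ∼, i.e., its (i,j)-entry is 0 whenever i ≁ j; and (ii) for all i, j, the conjugated commutator g [x_i, x_j] g⁻¹ is a diagonal matrix whose diagonal entries are constant on each equivalence class of ∼ (i.e., it lies in the center Z of the block subgroup determined by ∼). -/
open Matrix
open scoped commutatorElement

noncomputable section

lemma toEuclideanLin_mul' {m : ℕ} (A B : Matrix (Fin m) (Fin m) ℂ) :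
    Matrix.toEuclideanLin (A * B) = Matrix.toEuclideanLin A ∘ₗ Matrix.toEuclideanLin B := by
  apply LinearMap.ext
  intro v
  simp [Matrix.toEuclideanLin_apply, Matrix.mulVec_mulVec]

lemma commute_toEuclideanLin {m : ℕ} {A B : Matrix (Fin m) (Fin m) ℂ} (h : Commute A B) :
    Commute (Matrix.toEuclideanLin A) (Matrix.toEuclideanLin B) := by
  unfold Commute SemiconjBy
  rw [Module.End.mul_eq_comp, Module.End.mul_eq_comp, ← toEuclideanLin_mul',
    ← toEuclideanLin_mul', h]

lemma herm_re {m : ℕ} (A : Matrix (Fin m) (Fin m) ℂ) :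
    (((1 : ℂ)/2) • (A + star A)).IsHermitian := by
  show star _ = _
  rw [star_smul, star_add, star_star]
  rw [show star ((1:ℂ)/2) = ((1:ℂ)/2) by simp]
  rw [add_comm]

lemma herm_im {m : ℕ} (A : Matrix (Fin m) (Fin m) ℂ) :
    ((-Complex.I/2) • (A - star A)).IsHermitian := by
  show star _ = _
  rw [star_smul, star_sub, star_star]
  rw [show star (-Complex.I/2 : ℂ) = Complex.I/2 by simp [Complex.star_def]]
  rw [show star A - A = -(A - star A) by abel]
  rw [smul_neg, ← neg_smul, neg_div]

set_option maxHeartbeats 1000000 in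
/-- Any `n`-tuple in `U(m)` generating a subgroup of nilpotency class at most 2 can be
simultaneously conjugated so that all entries are block matrices with respect to a common
equivalence relation on indices, and all commutators become diagonal matrices constant on each
block (i.e. lie in the center of the block subgroup). -/
theorem stmt16 (m n : ℕ) (hm : 1 ≤ m) (x : Fin n → Matrix.unitaryGroup (Fin m) ℂ)
    (hx : lcs (Subgroup.closure (Set.range x)) 2 = ⊥) :
    ∃ (g : Matrix.unitaryGroup (Fin m) ℂ) (R : Fin m → Fin m → Prop), Equivalence R ∧
      (∀ k, ∀ i j, ¬ R i j →
        ((g * x k * g⁻¹ : Matrix.unitaryGroup (Fin m) ℂ) : Matrix (Fin m) (Fin m) ℂ) i j = 0) ∧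
      (∀ k l,
        (∀ i j, i ≠ j →
          ((g * ⁅x k, x l⁆ * g⁻¹ : Matrix.unitaryGroup (Fin m) ℂ) : Matrix (Fin m) (Fin m) ℂ) i j
            = 0) ∧
        (∀ i j, R i j →
          ((g * ⁅x k, x l⁆ * g⁻¹ : Matrix.unitaryGroup (Fin m) ℂ) : Matrix (Fin m) (Fin m) ℂ) i i
            = ((g * ⁅x k, x l⁆ * g⁻¹ : Matrix.unitaryGroup (Fin m) ℂ) : Matrix (Fin m) (Fin m) ℂ)
                j j)) := by
  classical
  set H := Subgroup.closure (Set.range x) with hH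
  have hxH : ∀ k, x k ∈ H := fun k => Subgroup.subset_closure ⟨k, rfl⟩
  simp only [lcs] at hx
  have hle : ⁅H, H⁆ ≤ Subgroup.centralizer (H : Set (Matrix.unitaryGroup (Fin m) ℂ)) :=
    Subgroup.commutator_eq_bot_iff_le_centralizer.mp hx
  have hcomm : ∀ k l (h : Matrix.unitaryGroup (Fin m) ℂ), h ∈ H → Commute ⁅x k, x l⁆ h := by
    intro k l h hh
    have hz : ⁅x k, x l⁆ ∈ ⁅H, H⁆ := Subgroup.commutator_mem_commutator (hxH k) (hxH l)
    have h2 := hle hz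
    rw [Subgroup.mem_centralizer_iff] at h2
    exact (h2 h hh).symm
  have hzH : ∀ k l, (⁅x k, x l⁆ : Matrix.unitaryGroup (Fin m) ℂ) ∈ H := by
    intro k l
    rw [commutatorElement_def]
    exact H.mul_mem (H.mul_mem (H.mul_mem (hxH k) (hxH l)) (H.inv_mem (hxH k)))
      (H.inv_mem (hxH l))
  -- commuting facts at the matrix level
  have coeComm : ∀ (a b : Matrix.unitaryGroup (Fin m) ℂ), Commute a b →
      Commute (↑a : Matrix (Fin m) (Fin m) ℂ) ↑b := fun a b h => Subtype.ext_iff.mp h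
  have coeInv : ∀ (a : Matrix.unitaryGroup (Fin m) ℂ),
      ((a⁻¹ : Matrix.unitaryGroup (Fin m) ℂ) : Matrix (Fin m) (Fin m) ℂ) = star ↑a := by
    intro a
    rw [← Unitary.star_eq_inv, Unitary.coe_star]
  have coeCommStar : ∀ (a b : Matrix.unitaryGroup (Fin m) ℂ), Commute a b →
      Commute (↑a : Matrix (Fin m) (Fin m) ℂ) (star ↑b) := by
    intro a b h
    rw [← coeInv]
    exact coeComm _ _ h.inv_right
  set z : Fin n × Fin n → Matrix.unitaryGroup (Fin m) ℂ := fun p => ⁅x p.1, x p.2⁆ with hzdef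
  set mz : Fin n × Fin n → Matrix (Fin m) (Fin m) ℂ := fun p => ↑(z p) with hmzdef
  have hzx : ∀ p k, Commute (mz p) (↑(x k) : Matrix (Fin m) (Fin m) ℂ) :=
    fun p k => coeComm _ _ (hcomm _ _ _ (hxH k))
  have hzxs : ∀ p k, Commute (star (mz p)) (↑(x k) : Matrix (Fin m) (Fin m) ℂ) :=
    fun p k => (coeCommStar _ _ (hcomm _ _ _ (hxH k)).symm).symm
  have hzz : ∀ p q, Commute (z p) (z q) := fun p q => hcomm _ _ _ (hzH _ _)
  -- the symmetric family
  set M : (Fin n × Fin n) × Bool → Matrix (Fin m) (Fin m) ℂ := fun i =>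
    if i.2 then ((1 : ℂ)/2) • (mz i.1 + star (mz i.1))
    else (-Complex.I/2) • (mz i.1 - star (mz i.1)) with hMdef
  have hMherm : ∀ i, (M i).IsHermitian := by
    rintro ⟨p, (_|_)⟩
    · simpa [hMdef] using herm_im (mz p)
    · simpa [hMdef] using herm_re (mz p)
  have hMcomm : ∀ i j, Commute (M i) (M j) := by
    intro i j
    have h1 : Commute (mz i.1) (mz j.1) := coeComm _ _ (hzz _ _)
    have h2 : Commute (mz i.1) (star (mz j.1)) := coeCommStar _ _ (hzz _ _)
    have h3 : Commute (star (mz i.1)) (mz j.1) := (coeCommStar _ _ (hzz _ _).symm).symm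
    have h4 : Commute (star (mz i.1)) (star (mz j.1)) := by
      rw [← coeInv, ← coeInv]
      exact coeComm _ _ ((hzz i.1 j.1).inv_inv)
    rcases i with ⟨p, bi⟩; rcases j with ⟨q, bj⟩
    cases bi <;> cases bj <;>
      · simp only [hMdef, if_true, if_false, Bool.false_eq_true]
        apply Commute.smul_left
        apply Commute.smul_right
        first
          | exact (h1.add_right h2).add_left (h3.add_right h4)
          | exact (h1.sub_right h2).sub_left (h3.sub_right h4)
          | exact (h1.add_right h2).sub_left (h3.add_right h4)
          | exact (h1.sub_right h2).add_left (h3.sub_right h4)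
  have hMx : ∀ i k, Commute (M i) (↑(x k) : Matrix (Fin m) (Fin m) ℂ) := by
    rintro ⟨p, bi⟩ k
    cases bi <;>
      · simp only [hMdef, if_true, if_false, Bool.false_eq_true]
        apply Commute.smul_left
        first
          | exact (hzx p k).add_left (hzxs p k)
          | exact (hzx p k).sub_left (hzxs p k)
  -- the family of symmetric endomorphisms
  set T : (Fin n × Fin n) × Bool → Module.End ℂ (EuclideanSpace ℂ (Fin m)) :=
    fun i => Matrix.toEuclideanLin (M i) with hTdef
  have hTsym : ∀ i, (T i).IsSymmetric := fun i =>
    Matrix.isHermitian_iff_isSymmetric.mp (hMherm i)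
  have hV : DirectSum.IsInternal
      (fun χ : ((Fin n × Fin n) × Bool) → ℂ => ⨅ i, Module.End.eigenspace (T i) (χ i)) :=
    LinearMap.IsSymmetric.LinearMap.IsSymmetric.directSum_isInternal_of_pairwise_commute
      hTsym (fun i j _ => commute_toEuclideanLin (hMcomm i j))
  have hV' := LinearMap.IsSymmetric.orthogonalFamily_iInf_eigenspaces hTsym
  have hn : Module.finrank ℂ (EuclideanSpace ℂ (Fin m)) = m := by
    simp [finrank_euclideanSpace]
  set W : (((Fin n × Fin n) × Bool) → ℂ) → Submodule ℂ (EuclideanSpace ℂ (Fin m)) :=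
    fun χ => ⨅ i, Module.End.eigenspace (T i) (χ i) with hWdef
  obtain ⟨hind, hsup⟩ := (DirectSum.isInternal_submodule_iff_iSupIndep_and_iSup_eq_top W).mp hV
  have hfin : {χ | W χ ≠ ⊥}.Finite := WellFoundedGT.finite_ne_bot_of_iSupIndep hind
  letI : Fintype {χ // W χ ≠ ⊥} := hfin.fintype
  have hV2 : DirectSum.IsInternal (fun χ : {χ // W χ ≠ ⊥} => W χ.1) := by
    rw [DirectSum.isInternal_submodule_iff_iSupIndep_and_iSup_eq_top]
    constructor
    · exact hind.comp Subtype.val_injective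
    · apply le_antisymm le_top
      rw [← hsup]
      apply iSup_le
      intro χ
      by_cases h : W χ = ⊥
      · rw [h]; exact bot_le
      · exact le_iSup (fun χ' : {χ // W χ ≠ ⊥} => W χ'.1) ⟨χ, h⟩
  have hV2' := hV'.comp
    (Subtype.val_injective : Function.Injective (Subtype.val : {χ // W χ ≠ ⊥} → _))
  set b := hV2.subordinateOrthonormalBasis hn hV2' with hbdef
  set σ : Fin m → {χ // W χ ≠ ⊥} :=
    fun a => hV2.subordinateOrthonormalBasisIndex hn a hV2' with hσdef0
  set σ' : Fin m → ((Fin n × Fin n) × Bool) → ℂ := fun a => (σ a).1 with hσdef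
  have hbmem : ∀ a, b a ∈ ⨅ i, Module.End.eigenspace (T i) (σ' a i) :=
    fun a => hV2.subordinateOrthonormalBasis_subordinate hn a hV2'
  have heig : ∀ a i, Matrix.toEuclideanLin (M i) (b a) = σ' a i • b a := by
    intro a i
    exact Module.End.mem_eigenspace_iff.mp ((Submodule.mem_iInf _).mp (hbmem a) i)
  -- decomposition of each commutator
  have hdecomp : ∀ p, mz p = M (p, true) + Complex.I • M (p, false) := by
    intro p
    simp only [hMdef, if_true, if_false, Bool.false_eq_true]
    rw [smul_smul, show Complex.I * (-Complex.I/2) = (1:ℂ)/2 by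
      rw [mul_div_assoc', mul_neg, Complex.I_mul_I, neg_neg]]
    module
  have hzeig : ∀ p a, Matrix.toEuclideanLin (mz p) (b a)
      = (σ' a (p, true) + Complex.I * σ' a (p, false)) • b a := by
    intro p a
    rw [hdecomp p, map_add, _root_.map_smul, LinearMap.add_apply, LinearMap.smul_apply]
    rw [heig a (p, true), heig a (p, false), smul_smul, add_smul]
  -- x k leaves joint eigenspaces invariant
  have hxinv : ∀ k a, Matrix.toEuclideanLin (↑(x k) : Matrix (Fin m) (Fin m) ℂ) (b a)
      ∈ ⨅ i, Module.End.eigenspace (T i) (σ' a i) := by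
    intro k a
    rw [Submodule.mem_iInf]
    intro i
    rw [Module.End.mem_eigenspace_iff]
    have hc := LinearMap.congr_fun (commute_toEuclideanLin (hMx i k)) (b a)
    simp only [Module.End.mul_apply] at hc
    rw [show T i (Matrix.toEuclideanLin (↑(x k) : Matrix (Fin m) (Fin m) ℂ) (b a))
        = Matrix.toEuclideanLin (M i) ((Matrix.toEuclideanLin (↑(x k) : Matrix (Fin m) (Fin m) ℂ)) (b a)) from rfl,
      hc, heig a i, _root_.map_smul]
  -- the conjugating unitary
  set u : Matrix.unitaryGroup (Fin m) ℂ :=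
    ⟨(EuclideanSpace.basisFun (Fin m) ℂ).toBasis.toMatrix ⇑b,
      (EuclideanSpace.basisFun (Fin m) ℂ).toMatrix_orthonormalBasis_mem_unitary b⟩ with hudef
  have hu : ∀ i j, (↑u : Matrix (Fin m) (Fin m) ℂ) i j = b j i := fun i j => rfl
  have key : ∀ (A : Matrix (Fin m) (Fin m) ℂ) (i j : Fin m),
      (star (↑u : Matrix (Fin m) (Fin m) ℂ) * A * (↑u : Matrix (Fin m) (Fin m) ℂ)) i j
        = @inner ℂ _ _ (b i) (Matrix.toEuclideanLin A (b j)) := by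
    intro A i j
    rw [mul_assoc]
    simp only [Matrix.mul_apply, Matrix.star_apply, PiLp.inner_apply, RCLike.inner_apply,
      Matrix.toEuclideanLin_apply, Matrix.mulVec, dotProduct, hu,
      RCLike.star_def]
    exact Finset.sum_congr rfl (fun _ _ => mul_comm _ _)
  have horth := orthonormal_iff_ite.mp b.orthonormal
  have hcross : ∀ (i j : Fin m), σ' i ≠ σ' j →
      ∀ w, w ∈ (⨅ i', Module.End.eigenspace (T i') (σ' j i')) →
        @inner ℂ _ _ (b i) w = 0 := by
    intro i j hne w hw
    have hne2 : σ i ≠ σ j := fun h => hne (congrArg Subtype.val h)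
    have h0 := hV2' hne2 ⟨b i, hbmem i⟩ ⟨w, hw⟩
    simpa using h0
  -- conjugation coercion
  have hgc : ∀ w : Matrix.unitaryGroup (Fin m) ℂ,
      ((u⁻¹ * w * u⁻¹⁻¹ : Matrix.unitaryGroup (Fin m) ℂ) : Matrix (Fin m) (Fin m) ℂ)
        = star (↑u : Matrix (Fin m) (Fin m) ℂ) * (↑w : Matrix (Fin m) (Fin m) ℂ)
          * (↑u : Matrix (Fin m) (Fin m) ℂ) := by
    intro w
    rw [inv_inv]
    show (↑(u⁻¹) : Matrix (Fin m) (Fin m) ℂ) * (↑w : Matrix (Fin m) (Fin m) ℂ)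
        * (↑u : Matrix (Fin m) (Fin m) ℂ) = _
    rw [coeInv]
  refine ⟨u⁻¹, fun a c => σ' a = σ' c, ⟨fun _ => rfl, Eq.symm, Eq.trans⟩, ?_, ?_⟩
  · intro k i j hne
    rw [hgc, key]
    exact hcross i j hne _ (hxinv k j)
  · intro k l
    have hz : ∀ i j : Fin m,
        (star (↑u : Matrix (Fin m) (Fin m) ℂ)
            * ((⁅x k, x l⁆ : Matrix.unitaryGroup (Fin m) ℂ) : Matrix (Fin m) (Fin m) ℂ)
            * (↑u : Matrix (Fin m) (Fin m) ℂ)) i j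
          = (σ' j ((k, l), true) + Complex.I * σ' j ((k, l), false)) * (if i = j then 1 else 0) := by
      intro i j
      rw [key]
      rw [show (↑(⁅x k, x l⁆ : Matrix.unitaryGroup (Fin m) ℂ) : Matrix (Fin m) (Fin m) ℂ)
          = mz (k, l) from rfl]
      rw [hzeig (k, l) j, inner_smul_right, horth i j]
    constructor
    · intro i j hne
      rw [hgc, hz i j, if_neg hne, mul_zero]
    · intro i j hR
      rw [hgc, hz i i, hz j j, if_pos rfl, if_pos rfl]
      rw [show σ' i = σ' j from hR]

end
end

section
/- Let P = 𝔽₂[y₁, y₂, y₃, b₁, b₂, z] be the polynomial ring over the field with two elements in six variables, let I ⊆ P be the ideal generated by y₁y₂, y₁y₃, y₂y₃, y₃², y₂b₁, y₃b₁, y₁b₂, y₃b₂, b₁b₂, b₁² + y₁²z, b₂² + y₂²z, and let A = P/I. Then the image in A of the element k = z + b₁ + y₁² + b₂ + y₂² is not a zero divisor: for every a ∈ A, if k·a = 0 then a = 0. -/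
noncomputable section

open MvPolynomial

/-- The polynomial ring `𝔽₂[y₁, y₂, y₃, b₁, b₂, z]`. -/
abbrev P : Type := MvPolynomial (Fin 6) (ZMod 2)

def y₁ : P := X 0
def y₂ : P := X 1
def y₃ : P := X 2
def b₁ : P := X 3
def b₂ : P := X 4
def z : P := X 5

/-- The ideal `I = (y₁y₂, y₁y₃, y₂y₃, y₃², y₂b₁, y₃b₁, y₁b₂, y₃b₂, b₁b₂, b₁²+y₁²z, b₂²+y₂²z)`. -/
def I6 : Ideal P :=
  Ideal.span {y₁ * y₂, y₁ * y₃, y₂ * y₃, y₃ ^ 2, y₂ * b₁, y₃ * b₁, y₁ * b₂, y₃ * b₂, b₁ * b₂,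
    b₁ ^ 2 + y₁ ^ 2 * z, b₂ ^ 2 + y₂ ^ 2 * z}

/-- The quotient ring `A = P/I`. -/
abbrev A : Type := P ⧸ I6

/-- The element `k = z + b₁ + y₁² + b₂ + y₂²`. -/
def k : P := z + b₁ + y₁ ^ 2 + b₂ + y₂ ^ 2

section Aux
open TrivSqZeroExt
-- auxiliary
abbrev D : Type := MvPolynomial (Fin 2) (ZMod 2)
abbrev R3 : Type := Polynomial (ZMod 2)
abbrev D3 : Type := DualNumber R3

def mkq : P →+* A := Ideal.Quotient.mk I6

def Φ₁ : P →+* D := (aeval ![X 0, 0, 0, X 0 * X 1, 0, X 1 ^ 2]).toRingHom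
def Φ₂ : P →+* D := (aeval ![0, X 0, 0, 0, X 0 * X 1, X 1 ^ 2]).toRingHom
def Φ₃ : P →+* D3 := (aeval ![0, 0, DualNumber.eps, 0, 0, inl Polynomial.X]).toRingHom

lemma memI {g m : P} (hg : g ∈ I6) (h : g ∣ m) : mkq m = 0 := by
  obtain ⟨t, rfl⟩ := h
  exact Ideal.Quotient.eq_zero_iff_mem.2 (Ideal.mul_mem_right _ _ hg)

lemma hg1 : y₁ * y₂ ∈ I6 := Ideal.subset_span (by simp)
lemma hg2 : y₁ * y₃ ∈ I6 := Ideal.subset_span (by simp)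
lemma hg3 : y₂ * y₃ ∈ I6 := Ideal.subset_span (by simp)
lemma hg4 : y₃ ^ 2 ∈ I6 := Ideal.subset_span (by simp)
lemma hg5 : y₂ * b₁ ∈ I6 := Ideal.subset_span (by simp)
lemma hg6 : y₃ * b₁ ∈ I6 := Ideal.subset_span (by simp)
lemma hg7 : y₁ * b₂ ∈ I6 := Ideal.subset_span (by simp)
lemma hg8 : y₃ * b₂ ∈ I6 := Ideal.subset_span (by simp)
lemma hg9 : b₁ * b₂ ∈ I6 := Ideal.subset_span (by simp)
lemma hg10 : b₁ ^ 2 + y₁ ^ 2 * z ∈ I6 := Ideal.subset_span (by simp)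
lemma hg11 : b₂ ^ 2 + y₂ ^ 2 * z ∈ I6 := Ideal.subset_span (by simp)

lemma addself (x : A) : x + x = 0 := by
  obtain ⟨p, rfl⟩ := Ideal.Quotient.mk_surjective x
  show mkq p + mkq p = 0
  rw [← map_add, CharTwo.add_self_eq_zero, map_zero]

lemma hB1 : mkq b₁ ^ 2 = mkq y₁ ^ 2 * mkq z := by
  have h0 : mkq (b₁ ^ 2 + y₁ ^ 2 * z) = 0 := Ideal.Quotient.eq_zero_iff_mem.2 hg10
  simp only [map_add, map_mul, map_pow] at h0
  have h1 := addself (mkq y₁ ^ 2 * mkq z)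
  linear_combination h0 - h1

lemma hB2 : mkq b₂ ^ 2 = mkq y₂ ^ 2 * mkq z := by
  have h0 : mkq (b₂ ^ 2 + y₂ ^ 2 * z) = 0 := Ideal.Quotient.eq_zero_iff_mem.2 hg11
  simp only [map_add, map_mul, map_pow] at h0
  have h1 := addself (mkq y₂ ^ 2 * mkq z)
  linear_combination h0 - h1

lemma pow_reduce {R : Type*} [CommRing R] (Y B Z : R) (h : B ^ 2 = Y ^ 2 * Z) :
    ∀ d : ℕ, B ^ d = Y ^ (2 * (d / 2)) * B ^ (d % 2) * Z ^ (d / 2) := by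
  intro d
  induction d using Nat.strong_induction_on with
  | _ d ih =>
    match d with
    | 0 => simp
    | 1 => simp
    | (n + 2) =>
      have : B ^ (n + 2) = B ^ n * B ^ 2 := by ring
      rw [this, ih n (by omega), h]
      rw [show 2 * ((n+2)/2) = 2 * (n/2) + 2 by omega, show (n+2) % 2 = n % 2 by omega,
        show (n+2)/2 = n/2 + 1 by omega]
      ring

def g1 : (Fin 2 →₀ ℕ) → A := fun u =>
  if u 0 = 0 then 0 else mkq (y₁ ^ (u 0 - u 1 % 2) * b₁ ^ (u 1 % 2) * z ^ (u 1 / 2))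
def g2 : (Fin 2 →₀ ℕ) → A := fun u =>
  if u 0 = 0 then 0 else mkq (y₂ ^ (u 0 - u 1 % 2) * b₂ ^ (u 1 % 2) * z ^ (u 1 / 2))

def Ψ₁ : D →ₗ[ZMod 2] A := Finsupp.linearCombination (ZMod 2) g1 ∘ₗ
  (AddMonoidAlgebra.coeffLinearEquiv (ZMod 2)).toLinearMap
def Ψ₂ : D →ₗ[ZMod 2] A := Finsupp.linearCombination (ZMod 2) g2 ∘ₗ
  (AddMonoidAlgebra.coeffLinearEquiv (ZMod 2)).toLinearMap

def Ψ₃ : D3 → A := fun x =>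
  Polynomial.aeval (mkq z) x.fst + mkq y₃ * Polynomial.aeval (mkq z) x.snd

lemma Ψ₃_zero : Ψ₃ 0 = 0 := by simp [Ψ₃]

lemma Ψ₃_add (x y : D3) : Ψ₃ (x + y) = Ψ₃ x + Ψ₃ y := by
  simp only [Ψ₃, fst_add, snd_add, map_add, mul_add]; ring

lemma Ψ₃_inl (q : R3) : Ψ₃ (inl q) = Polynomial.aeval (mkq z) q := by
  simp [Ψ₃]

lemma Ψ₃_inr (q : R3) : Ψ₃ (inr q) = mkq y₃ * Polynomial.aeval (mkq z) q := by
  simp [Ψ₃]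

lemma Ψ₁_monomial (u : Fin 2 →₀ ℕ) : Ψ₁ (monomial u 1) = g1 u := by
  rw [← single_eq_monomial]
  show Finsupp.linearCombination (ZMod 2) g1 (Finsupp.single u 1) = g1 u
  rw [Finsupp.linearCombination_single]
  rw [one_smul]

lemma Ψ₂_monomial (u : Fin 2 →₀ ℕ) : Ψ₂ (monomial u 1) = g2 u := by
  rw [← single_eq_monomial]
  show Finsupp.linearCombination (ZMod 2) g2 (Finsupp.single u 1) = g2 u
  rw [Finsupp.linearCombination_single]
  rw [one_smul]

lemma vec6_5 {γ : Type*} (x0 x1 x2 x3 x4 x5 : γ) : (![x0,x1,x2,x3,x4,x5] : Fin 6 → γ) 5 = x5 := rfl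
lemma vec6_2 {γ : Type*} (x0 x1 x2 x3 x4 x5 : γ) : (![x0,x1,x2,x3,x4,x5] : Fin 6 → γ) 2 = x2 := rfl
lemma vec6_3 {γ : Type*} (x0 x1 x2 x3 x4 x5 : γ) : (![x0,x1,x2,x3,x4,x5] : Fin 6 → γ) 3 = x3 := rfl
lemma vec6_4 {γ : Type*} (x0 x1 x2 x3 x4 x5 : γ) : (![x0,x1,x2,x3,x4,x5] : Fin 6 → γ) 4 = x4 := rfl

lemma Ψ₁_pow (α β : ℕ) : Ψ₁ (X 0 ^ α * X 1 ^ β) =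
    if α = 0 then 0 else mkq (y₁ ^ (α - β % 2) * b₁ ^ (β % 2) * z ^ (β / 2)) := by
  rw [X_pow_eq_monomial, X_pow_eq_monomial, monomial_mul, one_mul, Ψ₁_monomial]
  simp [g1, Finsupp.single_apply]

lemma Ψ₂_pow (α β : ℕ) : Ψ₂ (X 0 ^ α * X 1 ^ β) =
    if α = 0 then 0 else mkq (y₂ ^ (α - β % 2) * b₂ ^ (β % 2) * z ^ (β / 2)) := by
  rw [X_pow_eq_monomial, X_pow_eq_monomial, monomial_mul, one_mul, Ψ₂_monomial]
  simp [g2, Finsupp.single_apply]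

lemma monomial_prod (u : Fin 6 →₀ ℕ) : (monomial u (1 : ZMod 2) : P) =
    y₁ ^ u 0 * y₂ ^ u 1 * y₃ ^ u 2 * b₁ ^ u 3 * b₂ ^ u 4 * z ^ u 5 := by
  rw [monomial_eq, Finsupp.prod_fintype _ _ (fun i => pow_zero _), Fin.prod_univ_six]
  simp [y₁, y₂, y₃, b₁, b₂, z]

lemma Φ₁_prod (u : Fin 6 →₀ ℕ) : Φ₁ (monomial u 1) =
    X 0 ^ u 0 * 0 ^ u 1 * 0 ^ u 2 * (X 0 * X 1) ^ u 3 * 0 ^ u 4 * (X 1 ^ 2) ^ u 5 := by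
  rw [monomial_prod]
  simp only [Φ₁, map_mul, map_pow, AlgHom.toRingHom_eq_coe, RingHom.coe_coe, y₁, y₂, y₃, b₁, b₂, z,
    aeval_X, Matrix.cons_val_zero, Matrix.cons_val_one, Matrix.head_cons, vec6_5]
  norm_num [Matrix.cons_val_succ, vec6_2, vec6_3, vec6_4]

lemma Φ₂_prod (u : Fin 6 →₀ ℕ) : Φ₂ (monomial u 1) =
    0 ^ u 0 * X 0 ^ u 1 * 0 ^ u 2 * 0 ^ u 3 * (X 0 * X 1) ^ u 4 * (X 1 ^ 2) ^ u 5 := by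
  rw [monomial_prod]
  simp only [Φ₂, map_mul, map_pow, AlgHom.toRingHom_eq_coe, RingHom.coe_coe, y₁, y₂, y₃, b₁, b₂, z,
    aeval_X, Matrix.cons_val_zero, Matrix.cons_val_one, Matrix.head_cons, vec6_5]
  norm_num [Matrix.cons_val_succ, vec6_2, vec6_3, vec6_4]

lemma Φ₃_prod (u : Fin 6 →₀ ℕ) : Φ₃ (monomial u 1) =
    0 ^ u 0 * 0 ^ u 1 * DualNumber.eps ^ u 2 * 0 ^ u 3 * 0 ^ u 4 * inl (Polynomial.X ^ u 5) := by
  rw [monomial_prod]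
  simp only [Φ₃, map_mul, map_pow, AlgHom.toRingHom_eq_coe, RingHom.coe_coe, y₁, y₂, y₃, b₁, b₂, z,
    aeval_X, Matrix.cons_val_zero, Matrix.cons_val_one, Matrix.head_cons, vec6_5, inl_pow]
  norm_num [Matrix.cons_val_succ, vec6_2, vec6_3, vec6_4]

lemma eps_mul_inl (q : R3) : (DualNumber.eps * inl q : D3) = inr q := by
  rw [mul_comm]
  show (inl q * inr 1 : D3) = inr q
  rw [inl_mul_inr, smul_eq_mul, mul_one]

lemma eps_pow (n : ℕ) : (DualNumber.eps : D3) ^ (n + 1 + 1) = 0 := by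
  rw [pow_add, pow_add, pow_one, mul_assoc, DualNumber.eps_mul_eps, mul_zero]

set_option maxHeartbeats 2000000 in
lemma key_mono (u : Fin 6 →₀ ℕ) :
    mkq (monomial u 1) = Ψ₁ (Φ₁ (monomial u 1)) + Ψ₂ (Φ₂ (monomial u 1)) + Ψ₃ (Φ₃ (monomial u 1)) := by
  rw [Φ₁_prod, Φ₂_prod, Φ₃_prod, monomial_prod]
  generalize u 0 = a
  generalize u 1 = b
  generalize u 2 = c
  generalize u 3 = d
  generalize u 4 = e
  generalize u 5 = f
  by_cases hG1 : a = 0 ∧ d = 0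
  · obtain ⟨rfl, rfl⟩ := hG1
    by_cases hG2 : b = 0 ∧ e = 0
    · obtain ⟨rfl, rfl⟩ := hG2
      rcases c with _ | (_ | c)
      · -- pure z^f
        simp only [pow_zero, one_mul, mul_one]
        rw [show ((X 1 : D) ^ 2) ^ f = X 0 ^ 0 * X 1 ^ (2 * f) by ring, Ψ₁_pow, Ψ₂_pow,
          if_pos rfl, if_pos rfl, Ψ₃_inl]
        simp [map_pow]
      · -- y₃ * z^f
        simp only [pow_zero, pow_one, one_mul, mul_one, zero_add]
        rw [eps_mul_inl, Ψ₃_inr]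
        simp [map_mul, map_pow, zero_pow]
      · -- y₃^(c+2)
        rw [memI hg4 ⟨y₁ ^ 0 * y₂ ^ 0 * y₃ ^ c * b₁ ^ 0 * b₂ ^ 0 * z ^ f, by simp only [Nat.succ_eq_add_one, pow_succ]; ring⟩]
        rw [eps_pow]
        simp [Ψ₃_zero, pow_succ]
    · have hbe : b ≠ 0 ∨ e ≠ 0 := by tauto
      rcases c with _ | c
      · -- main case G2, c = 0
        have hΦ₁ : (X 0 : D) ^ 0 * 0 ^ b * 0 ^ 0 * (X 0 * X 1) ^ 0 * 0 ^ e * (X 1 ^ 2) ^ f = 0 := by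
          rcases hbe with hb | he
          · simp [zero_pow hb]
          · simp [zero_pow he]
        have hΦ₃ : (0 : D3) ^ 0 * 0 ^ b * DualNumber.eps ^ 0 * 0 ^ 0 * 0 ^ e *
            inl (Polynomial.X ^ f) = 0 := by
          rcases hbe with hb | he
          · simp [zero_pow hb]
          · simp [zero_pow he]
        rw [hΦ₁, hΦ₃, map_zero, Ψ₃_zero]
        simp only [pow_zero, one_mul, mul_one, zero_add, add_zero]
        rw [show (X 0 : D) ^ b * (X 0 * X 1) ^ e * ((X 1 : D) ^ 2) ^ f
            = X 0 ^ (b + e) * X 1 ^ (e + 2 * f) by ring, Ψ₂_pow, if_neg (by omega)]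
        rw [show b + e - (e + 2 * f) % 2 = b + 2 * (e / 2) by omega,
          show (e + 2 * f) % 2 = e % 2 by omega, show (e + 2 * f) / 2 = e / 2 + f by omega]
        simp only [map_mul, map_pow]
        rw [pow_reduce (mkq y₂) (mkq b₂) (mkq z) hB2 e]
        ring
      · -- G2 present, c ≥ 1 : in I6
        rcases hbe with hb | he
        · obtain ⟨b', rfl⟩ := Nat.exists_eq_succ_of_ne_zero hb
          rw [memI hg3 ⟨y₁ ^ 0 * y₂ ^ b' * y₃ ^ c * b₁ ^ 0 * b₂ ^ e * z ^ f, by simp only [Nat.succ_eq_add_one, pow_succ]; ring⟩]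
          simp [Ψ₃_zero, pow_succ]
        · obtain ⟨e', rfl⟩ := Nat.exists_eq_succ_of_ne_zero he
          rw [memI hg8 ⟨y₁ ^ 0 * y₂ ^ b * y₃ ^ c * b₁ ^ 0 * b₂ ^ e' * z ^ f, by simp only [Nat.succ_eq_add_one, pow_succ]; ring⟩]
          simp [Ψ₃_zero, pow_succ]
  · have had : a ≠ 0 ∨ d ≠ 0 := by tauto
    by_cases hG2 : b = 0 ∧ e = 0
    · obtain ⟨rfl, rfl⟩ := hG2
      rcases c with _ | c
      · -- main case G1, c = 0
        have hΦ₂ : (0 : D) ^ a * X 0 ^ 0 * 0 ^ 0 * 0 ^ d * (X 0 * X 1) ^ 0 * (X 1 ^ 2) ^ f = 0 := by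
          rcases had with ha | hd
          · simp [zero_pow ha]
          · simp [zero_pow hd]
        have hΦ₃ : (0 : D3) ^ a * 0 ^ 0 * DualNumber.eps ^ 0 * 0 ^ d * 0 ^ 0 *
            inl (Polynomial.X ^ f) = 0 := by
          rcases had with ha | hd
          · simp [zero_pow ha]
          · simp [zero_pow hd]
        rw [hΦ₂, hΦ₃, map_zero, Ψ₃_zero]
        simp only [pow_zero, one_mul, mul_one, zero_add, add_zero]
        rw [show (X 0 : D) ^ a * (X 0 * X 1) ^ d * ((X 1 : D) ^ 2) ^ f
            = X 0 ^ (a + d) * X 1 ^ (d + 2 * f) by ring, Ψ₁_pow, if_neg (by omega)]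
        rw [show a + d - (d + 2 * f) % 2 = a + 2 * (d / 2) by omega,
          show (d + 2 * f) % 2 = d % 2 by omega, show (d + 2 * f) / 2 = d / 2 + f by omega]
        simp only [map_mul, map_pow]
        rw [pow_reduce (mkq y₁) (mkq b₁) (mkq z) hB1 d]
        ring
      · rcases had with ha | hd
        · obtain ⟨a', rfl⟩ := Nat.exists_eq_succ_of_ne_zero ha
          rw [memI hg2 ⟨y₁ ^ a' * y₂ ^ 0 * y₃ ^ c * b₁ ^ d * b₂ ^ 0 * z ^ f, by simp only [Nat.succ_eq_add_one, pow_succ]; ring⟩]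
          simp [Ψ₃_zero, pow_succ]
        · obtain ⟨d', rfl⟩ := Nat.exists_eq_succ_of_ne_zero hd
          rw [memI hg6 ⟨y₁ ^ a * y₂ ^ 0 * y₃ ^ c * b₁ ^ d' * b₂ ^ 0 * z ^ f, by simp only [Nat.succ_eq_add_one, pow_succ]; ring⟩]
          simp [Ψ₃_zero, pow_succ]
    · have hbe : b ≠ 0 ∨ e ≠ 0 := by tauto
      rcases had with ha | hd <;> rcases hbe with hb | he
      · obtain ⟨a', rfl⟩ := Nat.exists_eq_succ_of_ne_zero ha
        obtain ⟨b', rfl⟩ := Nat.exists_eq_succ_of_ne_zero hb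
        rw [memI hg1 ⟨y₁ ^ a' * y₂ ^ b' * y₃ ^ c * b₁ ^ d * b₂ ^ e * z ^ f, by simp only [Nat.succ_eq_add_one, pow_succ]; ring⟩]
        simp [Ψ₃_zero, pow_succ]
      · obtain ⟨a', rfl⟩ := Nat.exists_eq_succ_of_ne_zero ha
        obtain ⟨e', rfl⟩ := Nat.exists_eq_succ_of_ne_zero he
        rw [memI hg7 ⟨y₁ ^ a' * y₂ ^ b * y₃ ^ c * b₁ ^ d * b₂ ^ e' * z ^ f, by simp only [Nat.succ_eq_add_one, pow_succ]; ring⟩]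
        simp [Ψ₃_zero, pow_succ]
      · obtain ⟨d', rfl⟩ := Nat.exists_eq_succ_of_ne_zero hd
        obtain ⟨b', rfl⟩ := Nat.exists_eq_succ_of_ne_zero hb
        rw [memI hg5 ⟨y₁ ^ a * y₂ ^ b' * y₃ ^ c * b₁ ^ d' * b₂ ^ e * z ^ f, by simp only [Nat.succ_eq_add_one, pow_succ]; ring⟩]
        simp [Ψ₃_zero, pow_succ]
      · obtain ⟨d', rfl⟩ := Nat.exists_eq_succ_of_ne_zero hd
        obtain ⟨e', rfl⟩ := Nat.exists_eq_succ_of_ne_zero he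
        rw [memI hg9 ⟨y₁ ^ a * y₂ ^ b * y₃ ^ c * b₁ ^ d' * b₂ ^ e' * z ^ f, by simp only [Nat.succ_eq_add_one, pow_succ]; ring⟩]
        simp [Ψ₃_zero, pow_succ]

lemma key (p : P) : mkq p = Ψ₁ (Φ₁ p) + Ψ₂ (Φ₂ p) + Ψ₃ (Φ₃ p) := by
  induction p using MvPolynomial.induction_on' with
  | monomial u c =>
    fin_cases c
    · show mkq (monomial u 0) = Ψ₁ (Φ₁ (monomial u 0)) + Ψ₂ (Φ₂ (monomial u 0)) + Ψ₃ (Φ₃ (monomial u 0))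
      simp [Ψ₃_zero]
    · exact key_mono u
  | add p q hp hq =>
    rw [show Φ₃ (p + q) = Φ₃ p + Φ₃ q from Φ₃.map_add p q, Ψ₃_add]
    simp only [map_add]
    rw [hp, hq]
    ring

lemma charD (x : D) : x + x = 0 := CharTwo.add_self_eq_zero x

lemma Φ₁_I6 {q : P} (hq : q ∈ I6) : Φ₁ q = 0 := by
  revert q
  have : I6 ≤ RingHom.ker Φ₁ := by
    rw [I6, Ideal.span_le]
    intro x hx
    simp only [Set.mem_insert_iff, Set.mem_singleton_iff] at hx
    rw [SetLike.mem_coe, RingHom.mem_ker]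
    rcases hx with rfl|rfl|rfl|rfl|rfl|rfl|rfl|rfl|rfl|rfl|rfl <;>
      simp [Φ₁, y₁, y₂, y₃, b₁, b₂, z, Matrix.cons_val_succ, vec6_5]
    rw [show ((X 0 * X 1 : D)) ^ 2 + (X 0 : D) ^ 2 * X 1 ^ 2
        = (X 0 ^ 2 * X 1 ^ 2) + (X 0 ^ 2 * X 1 ^ 2) by ring]
    exact charD _
  exact fun q hq => this hq

lemma Φ₂_I6 {q : P} (hq : q ∈ I6) : Φ₂ q = 0 := by
  revert q
  have : I6 ≤ RingHom.ker Φ₂ := by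
    rw [I6, Ideal.span_le]
    intro x hx
    simp only [Set.mem_insert_iff, Set.mem_singleton_iff] at hx
    rw [SetLike.mem_coe, RingHom.mem_ker]
    rcases hx with rfl|rfl|rfl|rfl|rfl|rfl|rfl|rfl|rfl|rfl|rfl <;>
      simp [Φ₂, y₁, y₂, y₃, b₁, b₂, z, Matrix.cons_val_succ, vec6_5]
    rw [show ((X 0 * X 1 : D)) ^ 2 + (X 0 : D) ^ 2 * X 1 ^ 2
        = (X 0 ^ 2 * X 1 ^ 2) + (X 0 ^ 2 * X 1 ^ 2) by ring]
    exact charD _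
  exact fun q hq => this hq

lemma Φ₃_I6 {q : P} (hq : q ∈ I6) : Φ₃ q = 0 := by
  revert q
  have : I6 ≤ RingHom.ker Φ₃ := by
    rw [I6, Ideal.span_le]
    intro x hx
    simp only [Set.mem_insert_iff, Set.mem_singleton_iff] at hx
    rw [SetLike.mem_coe, RingHom.mem_ker]
    rcases hx with rfl|rfl|rfl|rfl|rfl|rfl|rfl|rfl|rfl|rfl|rfl <;>
      simp [Φ₃, y₁, y₂, y₃, b₁, b₂, z, Matrix.cons_val_succ, vec6_5, pow_two, DualNumber.eps_mul_eps]
  exact fun q hq => this hq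

lemma Φ₁_k : Φ₁ k = X 1 ^ 2 + X 0 * X 1 + X 0 ^ 2 := by
  simp [Φ₁, k, y₁, y₂, y₃, b₁, b₂, z, Matrix.cons_val_succ, vec6_5]

lemma Φ₂_k : Φ₂ k = X 1 ^ 2 + X 0 * X 1 + X 0 ^ 2 := by
  simp [Φ₂, k, y₁, y₂, y₃, b₁, b₂, z, Matrix.cons_val_succ, vec6_5]

lemma Φ₃_k : Φ₃ k = inl Polynomial.X := by
  simp [Φ₃, k, y₁, y₂, y₃, b₁, b₂, z, Matrix.cons_val_succ, vec6_5]

lemma k1_ne : (X 1 ^ 2 + X 0 * X 1 + X 0 ^ 2 : D) ≠ 0 := by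
  intro h
  have h2 := congrArg (eval ![1, 0]) h
  simp at h2

theorem stmt18_aux (a : A) (h : Ideal.Quotient.mk I6 k * a = 0) : a = 0 := by
  obtain ⟨p, rfl⟩ := Ideal.Quotient.mk_surjective a
  have hmem : k * p ∈ I6 := by
    rw [← Ideal.Quotient.eq_zero_iff_mem, map_mul]
    exact h
  have h1 : Φ₁ p = 0 := by
    have h0 := Φ₁_I6 hmem
    rw [map_mul, Φ₁_k] at h0
    exact (mul_eq_zero.1 h0).resolve_left k1_ne
  have h2 : Φ₂ p = 0 := by
    have h0 := Φ₂_I6 hmem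
    rw [map_mul, Φ₂_k] at h0
    exact (mul_eq_zero.1 h0).resolve_left k1_ne
  have h3 : Φ₃ p = 0 := by
    have h0 := Φ₃_I6 hmem
    rw [map_mul, Φ₃_k] at h0
    have hf : Polynomial.X * (Φ₃ p).fst = 0 := by
      have := congrArg TrivSqZeroExt.fst h0
      simpa using this
    have hs : Polynomial.X * (Φ₃ p).snd = 0 := by
      have := congrArg TrivSqZeroExt.snd h0
      simpa [TrivSqZeroExt.snd_mul, smul_eq_mul] using this
    apply TrivSqZeroExt.ext
    · exact (mul_eq_zero.1 hf).resolve_left Polynomial.X_ne_zero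
    · exact (mul_eq_zero.1 hs).resolve_left Polynomial.X_ne_zero
  have hkey := key p
  rw [h1, h2, h3, map_zero, map_zero, Ψ₃_zero] at hkey
  show mkq p = 0
  rw [hkey]
  ring

end Aux

/-- The image of `k` in `A = P/I` is not a zero divisor. -/
theorem stmt18 (a : A) (h : Ideal.Quotient.mk I6 k * a = 0) : a = 0 :=
  stmt18_aux a h

end
end
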